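/- arXiv:1910.08872 — 2 statements merged into one kernel-verified Lean document; each statement's English description precedes it below -/
import Mathlib

section
/- Let ν(w) denote the number of pipe dreams of a permutation w, and for u ∈ S_m let p_u(w) denote the number of occurrences of the pattern u in w. Suppose c assigns an integer c(u) to every permutation u of {1,…,m} for every m ≥ 1, and satisfies, for every n ≥ 1 and every permutation w of {1,…,n}: c(w) = ν(w) − 1 − Σ_{m=1}^{n−1} Σ_{u ∈ S_m} c(u)·p_u(w). Then for every permutation w of {1,…,n} that avoids the pattern 132 (there are no a<b<c with w(a)<w(c)<w(b)), c(w) = 0. -/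
/-- The simple transposition corresponding to the cell `(i, j)`, namely
`s_{i+j-1}`, swapping `i+j-1` and `i+j` (as a permutation of the positive integers). -/
def cellTrans (p : ℕ+ × ℕ+) : Equiv.Perm ℕ+ :=
  Equiv.swap (p.1 + p.2 - 1) (p.1 + p.2)

/-- Key used to order cells: rows increasing, and within a row, columns decreasing. -/
def cellKey (p : ℕ+ × ℕ+) : Lex (ℕ+ × ℕ+ᵒᵈ) :=
  toLex (p.1, OrderDual.toDual p.2)

/-- The product of the simple transpositions `s_{i+j-1}` over the cells `(i,j)` of `D`,
taken with `i` increasing and, for fixed `i`, `j` decreasing. -/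
def pdWord (D : Finset (ℕ+ × ℕ+)) : Equiv.Perm ℕ+ :=
  (((D.image cellKey).sort (· ≤ ·)).map
    (fun q => cellTrans ((ofLex q).1, OrderDual.ofDual (ofLex q).2))).prod

/-- The number of inversions of a permutation of the positive integers. -/
noncomputable def invNum (w : Equiv.Perm ℕ+) : ℕ :=
  Set.ncard {p : ℕ+ × ℕ+ | p.1 < p.2 ∧ w p.2 < w p.1}

/-- `D` is a pipe dream (RC-graph) of `w`. -/
def IsPipeDream (w : Equiv.Perm ℕ+) (D : Finset (ℕ+ × ℕ+)) : Prop :=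
  D.card = invNum w ∧ pdWord D = w

/-- The number of pipe dreams of `w`. -/
noncomputable def nu (w : Equiv.Perm ℕ+) : ℕ :=
  Set.ncard {D : Finset (ℕ+ × ℕ+) | IsPipeDream w D}

/-- The number of occurrences of the pattern 132 in `w`. -/
noncomputable def p132 (w : Equiv.Perm ℕ+) : ℕ :=
  Set.ncard {t : ℕ+ × ℕ+ × ℕ+ |
    t.1 < t.2.1 ∧ t.2.1 < t.2.2 ∧ w t.1 < w t.2.2 ∧ w t.2.2 < w t.2.1}

/-- The number of occurrences of the pattern 1432 in `w`. -/
noncomputable def p1432 (w : Equiv.Perm ℕ+) : ℕ :=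
  Set.ncard {t : ℕ+ × ℕ+ × ℕ+ × ℕ+ |
    t.1 < t.2.1 ∧ t.2.1 < t.2.2.1 ∧ t.2.2.1 < t.2.2.2 ∧
    w t.1 < w t.2.2.2 ∧ w t.2.2.2 < w t.2.2.1 ∧ w t.2.2.1 < w t.2.1}

/-- `w` avoids the pattern 1432. -/
def Avoids1432 (w : Equiv.Perm ℕ+) : Prop :=
  ¬ ∃ a b c d : ℕ+, a < b ∧ b < c ∧ c < d ∧ w a < w d ∧ w d < w c ∧ w c < w b

/-- The Rothe diagram of `w`. -/
def RD (w : Equiv.Perm ℕ+) : Set (ℕ+ × ℕ+) :=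
  {p | p.2 < w p.1 ∧ p.1 < w⁻¹ p.2}

/-- The Lehmer code of `w`: `code(w)_i = #{j > i : w(j) < w(i)}`. -/
noncomputable def lehmer (w : Equiv.Perm ℕ+) (i : ℕ+) : ℕ :=
  Set.ncard {j : ℕ+ | i < j ∧ w j < w i}

/-- The bottom pipe dream `B_w = {(i,j) : 1 ≤ j ≤ code(w)_i}` (as a set of cells). -/
def bottomSet (w : Equiv.Perm ℕ+) : Set (ℕ+ × ℕ+) :=
  {p | (p.2 : ℕ) ≤ lehmer w p.1}

/-- The top pipe dream `T_w = {(i,j) : 1 ≤ i ≤ code(w⁻¹)_j}` (as a set of cells). -/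
def topSet (w : Equiv.Perm ℕ+) : Set (ℕ+ × ℕ+) :=
  {p | (p.1 : ℕ) ≤ lehmer w⁻¹ p.2}

/-- `α(S)_m`: the number of cells of `S` on the diagonal `{(i,j) : i + j - 1 = m}`. -/
noncomputable def diagCount (S : Set (ℕ+ × ℕ+)) : ℕ+ → ℕ :=
  fun m => Set.ncard {p | p ∈ S ∧ p.1 + p.2 = m + 1}

/-- Ladder move of order `k` taking `D` to `D'`: writing `i = i₀ + k + 1` (so `i₀ = i - k - 1`
and automatically `i ≥ k + 2`), it requires `(i,j) ∈ D`, `(i,j+1) ∉ D`, `(i₀,j) ∉ D`,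
`(i₀,j+1) ∉ D`, and `(i',j), (i',j+1) ∈ D` for all `i - k ≤ i' < i`; it removes `(i,j)` and
adds `(i₀, j+1)`. -/
def LadderMove (k : ℕ) (D D' : Finset (ℕ+ × ℕ+)) : Prop :=
  ∃ i₀ j : ℕ+,
    (i₀ + k.succPNat, j) ∈ D ∧
    (i₀ + k.succPNat, j + 1) ∉ D ∧
    (i₀, j) ∉ D ∧
    (i₀, j + 1) ∉ D ∧
    (∀ i' : ℕ+, i₀ < i' → i' < i₀ + k.succPNat → (i', j) ∈ D ∧ (i', j + 1) ∈ D) ∧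
    D' = insert (i₀, j + 1) (D.erase (i₀ + k.succPNat, j))

/-- The identification of `{1, …, n}` (as `Fin n`, with `i : Fin n` standing for the
positive integer `i + 1`) with the positive integers `≤ n`. -/
def finPNatEquiv (n : ℕ) : Fin n ≃ {x : ℕ+ // (x : ℕ) ≤ n} where
  toFun i := ⟨⟨(i : ℕ) + 1, Nat.succ_pos _⟩, by
    show (i : ℕ) + 1 ≤ n
    omega⟩
  invFun x := ⟨(x.1 : ℕ) - 1, by
    rcases x with ⟨⟨v, hv⟩, h⟩
    show v - 1 < n
    simp only [PNat.mk_coe] at h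
    omega⟩
  left_inv i := by ext; simp
  right_inv x := by
    rcases x with ⟨⟨v, hv⟩, h⟩
    refine Subtype.ext (PNat.coe_injective ?_)
    show (v - 1) + 1 = v
    omega

/-- Extend a permutation of `{1, …, n}` to a permutation of the positive integers
fixing every integer greater than `n`. -/
def extendPerm {n : ℕ} (w : Equiv.Perm (Fin n)) : Equiv.Perm ℕ+ :=
  w.extendDomain (finPNatEquiv n)

/-- The number of occurrences of the pattern `u ∈ S_m` in `w ∈ S_n`. -/
noncomputable def pOcc {m n : ℕ} (u : Equiv.Perm (Fin m)) (w : Equiv.Perm (Fin n)) : ℕ :=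
  Set.ncard {a : Fin m → Fin n | StrictMono a ∧
    ∀ i j : Fin m, i < j → (w (a i) < w (a j) ↔ u i < u j)}


theorem Equiv.Perm.apply_inv_self {α : Type*} (f : Equiv.Perm α) (x : α) : f (f⁻¹ x) = x :=
  f.apply_symm_apply x

theorem Equiv.Perm.inv_apply_self {α : Type*} (f : Equiv.Perm α) (x : α) : f⁻¹ (f x) = x :=
  f.symm_apply_apply x

theorem Equiv.apply_inv_self {α : Type*} (f : Equiv.Perm α) (x : α) : f (f⁻¹ x) = x :=
  f.apply_symm_apply x

theorem Equiv.inv_apply_self {α : Type*} (f : Equiv.Perm α) (x : α) : f⁻¹ (f x) = x :=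
  f.symm_apply_apply x

/-- inversion set -/
def InvSet (w : Equiv.Perm ℕ+) : Set (ℕ+ × ℕ+) := {p | p.1 < p.2 ∧ w p.2 < w p.1}

lemma invNum_eq (w : Equiv.Perm ℕ+) : invNum w = Set.ncard (InvSet w) := rfl

lemma invSet_bdd {w : Equiv.Perm ℕ+} {n : ℕ+} (h : ∀ x, n < x → w x = x) :
    InvSet w ⊆ Set.Iic n ×ˢ Set.Iic n := by
  have hle : ∀ x : ℕ+, x ≤ n → w x ≤ n := by
    intro x hx
    by_contra hgt
    push_neg at hgt
    have h2 := h _ hgt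
    have h3 : w x = x := w.injective h2
    rw [h3] at hgt
    exact absurd hx (not_le.mpr hgt)
  rintro ⟨p, q⟩ ⟨h1, h2⟩
  simp only [Set.mem_prod, Set.mem_Iic]
  rcases le_or_gt q n with hq | hq
  · exact ⟨le_trans (le_of_lt h1) hq, hq⟩
  · exfalso
    rw [h _ hq] at h2
    rcases le_or_gt p n with hp | hp
    · exact absurd (lt_of_lt_of_le h2 (hle p hp)) (not_lt.mpr hq.le)
    · rw [h _ hp] at h2; exact absurd h1 (not_lt.mpr h2.le)

lemma invSet_finite_of_bdd {w : Equiv.Perm ℕ+} {n : ℕ+} (h : ∀ x, n < x → w x = x) :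
    (InvSet w).Finite :=
  Set.Finite.subset ((Set.finite_Iic n).prod (Set.finite_Iic n)) (invSet_bdd h)

/-- finite support implies finite inversion set -/
lemma invSet_finite_of_support {w : Equiv.Perm ℕ+} (h : {x | w x ≠ x}.Finite) :
    (InvSet w).Finite := by
  obtain ⟨n, hn⟩ := h.bddAbove
  exact invSet_finite_of_bdd (w := w) (n := n) (fun x hx => by
    by_contra hne
    exact absurd (hn hne) (not_le.mpr hx))

lemma invSubset (x y : Equiv.Perm ℕ+) :
    InvSet (x * y) ⊆ InvSet y ∪ (Prod.map ⇑y⁻¹ ⇑y⁻¹) '' InvSet x := by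
  rintro ⟨p, q⟩ ⟨h1, h2⟩
  simp only [Equiv.Perm.mul_apply] at h2
  rcases lt_trichotomy (y p) (y q) with hlt | heq | hgt
  · right
    refine ⟨(y p, y q), ⟨hlt, h2⟩, ?_⟩
    simp [Prod.map]
  · exact absurd (y.injective heq) (ne_of_lt h1)
  · exact Or.inl ⟨h1, hgt⟩

lemma disj_inv (x y : Equiv.Perm ℕ+) :
    Disjoint (InvSet y) ((Prod.map ⇑y⁻¹ ⇑y⁻¹) '' InvSet x) := by
  rw [Set.disjoint_right]
  rintro ⟨p, q⟩ ⟨⟨α, β⟩, ⟨hab, _⟩, heq⟩ ⟨_, hq⟩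
  simp only [Prod.map, Prod.mk.injEq] at heq
  obtain ⟨hp', hq'⟩ := heq
  subst hp' hq'
  simp only [Equiv.Perm.apply_inv_self] at hq
  exact absurd hab (not_lt.mpr hq.le)

lemma inv_add_of_good {x y : Equiv.Perm ℕ+}
    (hx : (InvSet x).Finite) (hy : (InvSet y).Finite)
    (hgood : ∀ α β : ℕ+, α < β → x β < x α → y⁻¹ α < y⁻¹ β) :
    invNum (x * y) = invNum x + invNum y := by
  have hset : InvSet (x * y) = InvSet y ∪ (Prod.map ⇑y⁻¹ ⇑y⁻¹) '' InvSet x := by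
    apply Set.Subset.antisymm (invSubset x y)
    rintro ⟨p, q⟩ (⟨h1, h2⟩ | ⟨⟨α, β⟩, ⟨hab, hx2⟩, heq⟩)
    · refine ⟨h1, ?_⟩
      simp only [Equiv.Perm.mul_apply]
      rcases lt_trichotomy (x (y q)) (x (y p)) with h | h | h
      · exact h
      · exact absurd (y.injective (x.injective h)) (ne_of_lt h1).symm
      · have := hgood (y q) (y p) h2 h
        simp only [Equiv.Perm.inv_apply_self] at this
        exact absurd h1 (not_lt.mpr this.le)
    · simp only [Prod.map, Prod.mk.injEq] at heq
      obtain ⟨hp', hq'⟩ := heq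
      subst hp' hq'
      refine ⟨hgood α β hab hx2, ?_⟩
      simp only [Equiv.Perm.mul_apply, Equiv.Perm.apply_inv_self]
      exact hx2
  have hinj : Function.Injective (Prod.map ⇑y⁻¹ ⇑y⁻¹) :=
    Prod.map_injective.mpr ⟨y⁻¹.injective, y⁻¹.injective⟩
  rw [invNum_eq, hset, Set.ncard_union_eq (disj_inv x y) hy (hx.image _),
    Set.ncard_image_of_injective _ hinj]
  simp only [invNum_eq]
  omega

lemma inv_le_add {x y : Equiv.Perm ℕ+}
    (hx : (InvSet x).Finite) (hy : (InvSet y).Finite) :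
    invNum (x * y) ≤ invNum x + invNum y := by
  calc invNum (x * y) ≤ Set.ncard (InvSet y ∪ (Prod.map ⇑y⁻¹ ⇑y⁻¹) '' InvSet x) :=
        Set.ncard_le_ncard (invSubset x y) (hy.union (hx.image _))
    _ ≤ Set.ncard (InvSet y) + Set.ncard ((Prod.map ⇑y⁻¹ ⇑y⁻¹) '' InvSet x) :=
        Set.ncard_union_le _ _
    _ = invNum y + invNum x := by
        rw [Set.ncard_image_of_injective _
          (Prod.map_injective.mpr ⟨y⁻¹.injective, y⁻¹.injective⟩)]
        rfl
    _ = invNum x + invNum y := by omega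

/-- if lengths add, there is no "bad pair" -/
lemma good_of_inv_add {x y : Equiv.Perm ℕ+}
    (hx : (InvSet x).Finite) (hy : (InvSet y).Finite)
    (hadd : invNum x + invNum y ≤ invNum (x * y)) :
    ∀ α β : ℕ+, α < β → x β < x α → y⁻¹ α < y⁻¹ β := by
  intro α β hab hx2
  by_contra hbad
  -- strict inequality
  have hne : y⁻¹ α ≠ y⁻¹ β := fun h => absurd (y⁻¹.injective h) (ne_of_lt hab)
  have hgt : y⁻¹ β < y⁻¹ α := lt_of_le_of_ne (not_lt.mp hbad) (Ne.symm hne)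
  have hsub : InvSet (x * y) ⊆ InvSet y ∪ (Prod.map ⇑y⁻¹ ⇑y⁻¹) '' (InvSet x \ {(α, β)}) := by
    rintro ⟨p, q⟩ ⟨h1, h2⟩
    simp only [Equiv.Perm.mul_apply] at h2
    rcases lt_trichotomy (y p) (y q) with hlt | heq | hgt'
    · right
      refine ⟨(y p, y q), ⟨⟨hlt, h2⟩, ?_⟩, by simp [Prod.map]⟩
      simp only [Set.mem_singleton_iff, Prod.mk.injEq, not_and]
      intro h1'
      intro h2'
      subst h1' h2'
      simp only [Equiv.Perm.inv_apply_self] at hgt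
      exact absurd h1 (not_lt.mpr hgt.le)
    · exact absurd (y.injective heq) (ne_of_lt h1)
    · exact Or.inl ⟨h1, hgt'⟩
  have hcard : Set.ncard (InvSet (x * y)) ≤ Set.ncard (InvSet y) + (Set.ncard (InvSet x) - 1) := by
    calc Set.ncard (InvSet (x * y)) ≤ Set.ncard (InvSet y ∪ (Prod.map ⇑y⁻¹ ⇑y⁻¹) '' (InvSet x \ {(α, β)})) :=
          Set.ncard_le_ncard hsub (hy.union (hx.diff.image _))
      _ ≤ Set.ncard (InvSet y) + Set.ncard ((Prod.map ⇑y⁻¹ ⇑y⁻¹) '' (InvSet x \ {(α, β)})) :=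
          Set.ncard_union_le _ _
      _ ≤ Set.ncard (InvSet y) + (Set.ncard (InvSet x) - 1) := by
          rw [Set.ncard_image_of_injective _
            (Prod.map_injective.mpr ⟨y⁻¹.injective, y⁻¹.injective⟩),
            Set.ncard_diff_singleton_of_mem (show ((α, β) : ℕ+ × ℕ+) ∈ InvSet x from ⟨hab, hx2⟩)]
  have hpos : 1 ≤ Set.ncard (InvSet x) := (Set.ncard_pos hx).mpr ⟨(α, β), hab, hx2⟩
  have hadd' : Set.ncard (InvSet x) + Set.ncard (InvSet y) ≤ Set.ncard (InvSet (x * y)) := hadd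
  omega

/-- simple transposition -/
def sP (k : ℕ+) : Equiv.Perm ℕ+ := Equiv.swap k (k + 1)

lemma pnat_lt_succ (k : ℕ+) : k < k + 1 := PNat.lt_add_one_iff.mpr le_rfl

lemma invSet_swap (k : ℕ+) : InvSet (sP k) = {(k, k + 1)} := by
  apply Set.Subset.antisymm
  · rintro ⟨p, q⟩ ⟨hpq, h⟩
    simp only [sP] at h
    rcases eq_or_ne p k with rfl | hpk
    · rw [Equiv.swap_apply_left] at h
      rcases eq_or_ne q (p + 1) with rfl | hq1
      · rfl
      · have hqk : q ≠ p := ne_of_gt hpq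
        rw [Equiv.swap_apply_of_ne_of_ne hqk hq1] at h
        exact absurd hpq (not_lt.mpr (PNat.lt_add_one_iff.mp h))
    · rcases eq_or_ne p (k + 1) with rfl | hpk1
      · rw [Equiv.swap_apply_right] at h
        have hqk : q ≠ k := ne_of_gt (lt_trans (pnat_lt_succ k) hpq)
        have hqk1 : q ≠ k + 1 := ne_of_gt hpq
        rw [Equiv.swap_apply_of_ne_of_ne hqk hqk1] at h
        exact absurd (lt_trans h (pnat_lt_succ k)) (not_lt.mpr hpq.le)
      · rw [Equiv.swap_apply_of_ne_of_ne hpk hpk1] at h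
        rcases eq_or_ne q k with rfl | hqk
        · rw [Equiv.swap_apply_left] at h
          exact absurd (lt_trans hpq (lt_trans (pnat_lt_succ q) h)) (lt_irrefl p)
        · rcases eq_or_ne q (k + 1) with rfl | hqk1
          · rw [Equiv.swap_apply_right] at h
            exact absurd (PNat.lt_add_one_iff.mp hpq) (not_le.mpr h)
          · rw [Equiv.swap_apply_of_ne_of_ne hqk hqk1] at h
            exact absurd (lt_trans hpq h) (lt_irrefl p)
  · rintro p hmem
    rw [Set.mem_singleton_iff] at hmem
    subst hmem
    refine ⟨pnat_lt_succ k, ?_⟩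
    show sP k (k + 1) < sP k k
    rw [sP, Equiv.swap_apply_left, Equiv.swap_apply_right]
    exact pnat_lt_succ k

lemma invNum_swap (k : ℕ+) : invNum (sP k) = 1 := by
  rw [invNum_eq, invSet_swap, Set.ncard_singleton]

lemma invSet_swap_finite (k : ℕ+) : (InvSet (sP k)).Finite := by
  rw [invSet_swap]; exact Set.finite_singleton _

lemma invSet_one : InvSet (1 : Equiv.Perm ℕ+) = ∅ := by
  ext ⟨p, q⟩
  simp only [InvSet, Set.mem_setOf_eq, Equiv.Perm.one_apply, Set.mem_empty_iff_false, iff_false,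
    not_and]
  exact fun h => not_lt.mpr h.le

lemma invNum_one : invNum (1 : Equiv.Perm ℕ+) = 0 := by
  rw [invNum_eq, invSet_one, Set.ncard_empty]

lemma prodSwaps_facts (l : List ℕ+) :
    (InvSet ((l.map sP).prod)).Finite ∧ invNum ((l.map sP).prod) ≤ l.length := by
  induction l with
  | nil => simp only [List.map_nil, List.prod_nil, List.length_nil, invNum_one, le_refl,
      and_true]; rw [invSet_one]; exact Set.finite_empty
  | cons a l ih =>
    obtain ⟨hfin, hlen⟩ := ih
    rw [List.map_cons, List.prod_cons]
    constructor
    · exact Set.Finite.subset ((hfin.union ((invSet_swap_finite a).image _)))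
        (by simpa using invSubset (sP a) ((l.map sP).prod))
    · calc invNum (sP a * (l.map sP).prod) ≤ invNum (sP a) + invNum ((l.map sP).prod) :=
          inv_le_add (invSet_swap_finite a) hfin
        _ ≤ (a :: l).length := by rw [invNum_swap]; simp only [List.length_cons]; omega

lemma eval_fix {l : List ℕ+} {x : ℕ+} (h : ∀ a ∈ l, a ≠ x ∧ a + 1 ≠ x) :
    (l.map sP).prod x = x := by
  induction l with
  | nil => simp
  | cons a l ih =>
    rw [List.map_cons, List.prod_cons, Equiv.Perm.mul_apply,
      ih (fun b hb => h b (List.mem_cons_of_mem a hb))]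
    exact Equiv.swap_apply_of_ne_of_ne (Ne.symm (h a (List.mem_cons_self)).1)
      (Ne.symm (h a (List.mem_cons_self)).2)

lemma eval_mem {l : List ℕ+} {x : ℕ+} (hl : l.Pairwise (· > ·)) (hx : x ∈ l) :
    (l.map sP).prod (x + 1) = x := by
  induction l with
  | nil => exact absurd hx (List.not_mem_nil)
  | cons a l ih =>
    rw [List.pairwise_cons] at hl
    obtain ⟨ha, hl'⟩ := hl
    rw [List.map_cons, List.prod_cons, Equiv.Perm.mul_apply]
    rcases List.mem_cons.mp hx with rfl | hx'
    · rw [eval_fix (fun b hb => ⟨ne_of_lt (lt_trans (ha b hb) (pnat_lt_succ x)),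
        fun hb1 => absurd (add_right_cancel hb1) (ne_of_lt (ha b hb))⟩)]
      exact Equiv.swap_apply_right x (x + 1) ▸ (by rw [sP, Equiv.swap_apply_right])
    · rw [ih hl' hx']
      have hxa : x < a := ha x hx'
      exact Equiv.swap_apply_of_ne_of_ne (ne_of_lt hxa)
        (ne_of_lt (lt_trans hxa (pnat_lt_succ a)))

lemma eval_run {l : List ℕ+} {x b : ℕ+} (hl : l.Pairwise (· > ·))
    (hx1 : ∀ a ∈ l, a + 1 ≠ x) (hrun : ∀ k, x ≤ k → k ≤ b → k ∈ l)
    (hb : ∀ a ∈ l, a ≠ b + 1) (hxb : x ≤ b) :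
    (l.map sP).prod x = b + 1 := by
  induction l generalizing b with
  | nil => exact absurd (hrun x le_rfl hxb) (List.not_mem_nil)
  | cons a l ih =>
    rw [List.pairwise_cons] at hl
    obtain ⟨ha, hl'⟩ := hl
    have hbl : b ∈ a :: l := hrun b hxb le_rfl
    have hab : b ≤ a := by
      rcases List.mem_cons.mp hbl with rfl | hb' 
      · exact le_rfl
      · exact (ha b hb').le
    rw [List.map_cons, List.prod_cons, Equiv.Perm.mul_apply]
    rcases eq_or_lt_of_le hab with rfl | hab'
    · -- a = b
      rcases eq_or_lt_of_le hxb with rfl | hxb'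
      · -- x = b, tail fixes x
        rw [eval_fix (fun c hc => ⟨ne_of_lt (ha c hc), hx1 c (List.mem_cons_of_mem _ hc)⟩)]
        rw [sP, Equiv.swap_apply_left]
      · -- x < b : peel to b - 1
        obtain ⟨b', rfl⟩ := PNat.exists_eq_succ_of_ne_one
          (show b ≠ 1 from fun h => absurd (h ▸ hxb') (not_lt.mpr (h ▸ PNat.one_le x)))
        have := ih hl' (fun c hc => hx1 c (List.mem_cons_of_mem _ hc))
          (fun k hk1 hk2 => by
            rcases List.mem_cons.mp (hrun k hk1 (hk2.trans (pnat_lt_succ b').le)) with rfl | h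
            · exact absurd hk2 (not_le.mpr (pnat_lt_succ b'))
            · exact h)
          (fun c hc => ne_of_lt (ha c hc)) (PNat.lt_add_one_iff.mp hxb')
        rw [this, sP, Equiv.swap_apply_left]
    · -- a > b, hence a > b + 1 since a ≠ b + 1
      have haa : b + 1 < a := lt_of_le_of_ne (PNat.add_one_le_iff.mpr hab')
        (Ne.symm (hb a (List.mem_cons_self)))
      have := ih hl' (fun c hc => hx1 c (List.mem_cons_of_mem _ hc))
        (fun k hk1 hk2 => by
          rcases List.mem_cons.mp (hrun k hk1 hk2) with rfl | h
          · exact absurd hk2 (not_le.mpr hab')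
          · exact h)
        (fun c hc => hb c (List.mem_cons_of_mem _ hc)) hxb
      rw [this]
      exact Equiv.swap_apply_of_ne_of_ne (ne_of_lt haa)
        (ne_of_lt (lt_trans haa (pnat_lt_succ a)))


/-! ### pdWord via sorted lists -/


def unkey (q : Lex (ℕ+ × ℕ+ᵒᵈ)) : ℕ+ × ℕ+ := ((ofLex q).1, OrderDual.ofDual (ofLex q).2)

lemma unkey_cellKey (p : ℕ+ × ℕ+) : unkey (cellKey p) = p := rfl

lemma cellKey_unkey (q : Lex (ℕ+ × ℕ+ᵒᵈ)) : cellKey (unkey q) = q := rfl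

def keyLT (p q : ℕ+ × ℕ+) : Prop := cellKey p < cellKey q

lemma keyLT_iff {p q : ℕ+ × ℕ+} : keyLT p q ↔ p.1 < q.1 ∨ (p.1 = q.1 ∧ q.2 < p.2) := by
  rw [keyLT, cellKey, cellKey, Prod.Lex.lt_iff]
  constructor
  · rintro (h | ⟨h1, h2⟩)
    · exact Or.inl h
    · exact Or.inr ⟨h1, h2⟩
  · rintro (h | ⟨h1, h2⟩)
    · exact Or.inl h
    · exact Or.inr ⟨h1, h2⟩

lemma keyLT_ne {p q : ℕ+ × ℕ+} (h : keyLT p q) : p ≠ q := by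
  intro hh; subst hh; exact lt_irrefl _ h

lemma pdWord_of_pairwise (l : List (ℕ+ × ℕ+)) (h : l.Pairwise keyLT) :
    pdWord l.toFinset = (l.map cellTrans).prod := by
  have hsorted : (l.map cellKey).Pairwise (· ≤ ·) :=
    List.Pairwise.map cellKey (fun {a b} hab => le_of_lt hab) h
  have hnd : (l.map cellKey).Nodup :=
    List.Pairwise.map cellKey (fun {a b} hab => ne_of_lt hab) h
  have hperm : List.Perm ((l.toFinset.image cellKey).sort (· ≤ ·)) (l.map cellKey) := by
    rw [List.perm_ext_iff_of_nodup (Finset.sort_nodup _ _) hnd]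
    intro q
    simp only [Finset.mem_sort, Finset.mem_image, List.mem_toFinset, List.mem_map]
  have heq : ((l.toFinset.image cellKey).sort (· ≤ ·)) = l.map cellKey :=
    List.Perm.eq_of_pairwise' (Finset.pairwise_sort _ _) hsorted hperm
  rw [pdWord, heq, List.map_map]
  congr 1

lemma card_toFinset_of_pairwise (l : List (ℕ+ × ℕ+)) (h : l.Pairwise keyLT) :
    l.toFinset.card = l.length := by
  rw [List.toFinset_card_of_nodup (h.imp keyLT_ne)]

lemma exists_pairwise_list (D : Finset (ℕ+ × ℕ+)) :
    ∃ l : List (ℕ+ × ℕ+), l.Pairwise keyLT ∧ l.toFinset = D := by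
  refine ⟨((D.image cellKey).sort (· ≤ ·)).map unkey, ?_, ?_⟩
  · have h1 : ((D.image cellKey).sort (· ≤ ·)).Pairwise (· < ·) := (Finset.sortedLT_sort _).pairwise
    rw [List.pairwise_map]
    exact h1.imp (fun {a b} hab => by rw [keyLT, cellKey_unkey, cellKey_unkey]; exact hab)
  · ext p
    simp only [List.mem_toFinset, List.mem_map, Finset.mem_sort, Finset.mem_image]
    constructor
    · rintro ⟨q, ⟨r, hr, rfl⟩, rfl⟩
      rw [unkey_cellKey]; exact hr
    · intro hp
      exact ⟨cellKey p, ⟨p, hp, rfl⟩, rfl⟩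


/-! ### support lemmas -/

lemma supp_inv (w : Equiv.Perm ℕ+) : {x | w⁻¹ x ≠ x} = {x | w x ≠ x} := by
  ext x
  simp only [Set.mem_setOf_eq]
  constructor
  · intro h hc; exact h ((congrArg ⇑w⁻¹ hc).symm.trans (w.inv_apply_self x))
  · intro h hc; exact h ((congrArg ⇑w hc).symm.trans (w.apply_inv_self x))

lemma supp_mul (a b : Equiv.Perm ℕ+) :
    {x | (a * b) x ≠ x} ⊆ {x | a x ≠ x} ∪ {x | b x ≠ x} := by
  intro x hx
  by_contra hc
  simp only [Set.mem_union, Set.mem_setOf_eq, not_or, not_not] at hc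
  exact hx (by rw [Equiv.Perm.mul_apply, hc.2, hc.1])

lemma supp_sP (k : ℕ+) : {x | sP k x ≠ x}.Finite := by
  apply Set.Finite.subset ((Set.finite_singleton (k + 1)).insert k)
  intro x hx
  by_contra hc
  simp only [Set.mem_insert_iff, Set.mem_singleton_iff, not_or] at hc
  exact hx (Equiv.swap_apply_of_ne_of_ne hc.1 hc.2)

lemma supp_prod (l : List ℕ+) : {x | (l.map sP).prod x ≠ x}.Finite := by
  induction l with
  | nil => simp only [List.map_nil, List.prod_nil]; convert Set.finite_empty; ext x; simp
  | cons a l ih =>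
    rw [List.map_cons, List.prod_cons]
    exact Set.Finite.subset ((supp_sP a).union ih) (supp_mul _ _)

/-! ### hat: conjugating by the shift -/

lemma pnat_succ_ne_one (n : ℕ+) : n + 1 ≠ 1 :=
  ne_of_gt (lt_of_le_of_lt (PNat.one_le n) (pnat_lt_succ n))

lemma pnat_succ_sub_one (m : ℕ+) : m + 1 - 1 = m := PNat.add_sub

lemma pnat_sub_one_add_one {x : ℕ+} (h : x ≠ 1) : x - 1 + 1 = x := by
  obtain ⟨m, rfl⟩ := PNat.exists_eq_succ_of_ne_one h
  rw [pnat_succ_sub_one]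

def hatPerm (v : Equiv.Perm ℕ+) (hv : v 1 = 1) : Equiv.Perm ℕ+ where
  toFun n := v (n + 1) - 1
  invFun n := v⁻¹ (n + 1) - 1
  left_inv n := by
    have h1 : v (n + 1) ≠ 1 := fun h =>
      pnat_succ_ne_one n (v.injective (h.trans hv.symm))
    show v⁻¹ (v (n + 1) - 1 + 1) - 1 = n
    rw [pnat_sub_one_add_one h1, Equiv.Perm.inv_apply_self, pnat_succ_sub_one]
  right_inv n := by
    have hv' : v⁻¹ 1 = 1 := by rw [← hv, Equiv.Perm.inv_apply_self, hv]
    have h1 : v⁻¹ (n + 1) ≠ 1 := fun h =>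
      pnat_succ_ne_one n (v⁻¹.injective (h.trans hv'.symm))
    show v (v⁻¹ (n + 1) - 1 + 1) - 1 = n
    rw [pnat_sub_one_add_one h1, Equiv.Perm.apply_inv_self, pnat_succ_sub_one]

lemma hatPerm_apply (v : Equiv.Perm ℕ+) (hv : v 1 = 1) (n : ℕ+) :
    hatPerm v hv n = v (n + 1) - 1 := rfl

lemma hatPerm_succ (v : Equiv.Perm ℕ+) (hv : v 1 = 1) (n : ℕ+) :
    hatPerm v hv n + 1 = v (n + 1) := by
  rw [hatPerm_apply, pnat_sub_one_add_one
    (fun h => pnat_succ_ne_one n (v.injective (h.trans hv.symm)))]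

lemma hatPerm_lt_iff (v : Equiv.Perm ℕ+) (hv : v 1 = 1) (p q : ℕ+) :
    hatPerm v hv p < hatPerm v hv q ↔ v (p + 1) < v (q + 1) := by
  rw [← hatPerm_succ v hv p, ← hatPerm_succ v hv q]
  exact (add_lt_add_iff_right 1).symm

lemma hatPerm_mul {x y : Equiv.Perm ℕ+} (hx : x 1 = 1) (hy : y 1 = 1) :
    hatPerm (x * y) (by rw [Equiv.Perm.mul_apply, hy, hx]) = hatPerm x hx * hatPerm y hy := by
  apply Equiv.ext
  intro n
  show (x * y) (n + 1) - 1 = x (y (n + 1) - 1 + 1) - 1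
  rw [pnat_sub_one_add_one (fun h => pnat_succ_ne_one n (y.injective (h.trans hy.symm))),
    Equiv.Perm.mul_apply]

lemma hatPerm_one : hatPerm 1 rfl = 1 := by
  apply Equiv.ext
  intro n
  exact (hatPerm_apply 1 rfl n).trans (pnat_succ_sub_one n)

lemma hatPerm_injective {x y : Equiv.Perm ℕ+} (hx : x 1 = 1) (hy : y 1 = 1)
    (h : hatPerm x hx = hatPerm y hy) : x = y := by
  apply Equiv.ext
  intro n
  rcases eq_or_ne n 1 with rfl | hn
  · rw [hx, hy]
  · obtain ⟨m, rfl⟩ := PNat.exists_eq_succ_of_ne_one hn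
    rw [← hatPerm_succ x hx m, ← hatPerm_succ y hy m, h]

lemma sP_one_fix {k : ℕ+} (h : k ≠ 1) : sP k 1 = 1 :=
  Equiv.swap_apply_of_ne_of_ne (Ne.symm h) (Ne.symm (pnat_succ_ne_one k))

lemma prod_one_fix {l : List ℕ+} (h : ∀ a ∈ l, a ≠ 1) : (l.map sP).prod 1 = 1 :=
  eval_fix (fun a ha => ⟨h a ha, pnat_succ_ne_one a⟩)

lemma hatPerm_sP (k : ℕ+) :
    hatPerm (sP (k + 1)) (sP_one_fix (pnat_succ_ne_one k)) = sP k := by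
  apply Equiv.ext
  intro n
  rw [hatPerm_apply]
  rcases eq_or_ne n k with rfl | hnk
  · rw [show sP (n + 1) (n + 1) = n + 1 + 1 from Equiv.swap_apply_left _ _,
      pnat_succ_sub_one, show sP n n = n + 1 from Equiv.swap_apply_left _ _]
  · rcases eq_or_ne n (k + 1) with rfl | hnk1
    · rw [show sP (k + 1) (k + 1 + 1) = k + 1 from Equiv.swap_apply_right _ _,
        pnat_succ_sub_one, show sP k (k + 1) = k from Equiv.swap_apply_right _ _]
    · rw [show sP (k + 1) (n + 1) = n + 1 from Equiv.swap_apply_of_ne_of_ne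
        (fun h => hnk (add_right_cancel h)) (fun h => hnk1 (add_right_cancel h)),
        pnat_succ_sub_one,
        show sP k n = n from Equiv.swap_apply_of_ne_of_ne hnk hnk1]

lemma hatPerm_prod (l : List ℕ+) (hv : ((l.map (· + 1)).map sP).prod 1 = 1) :
    hatPerm ((l.map (· + 1)).map sP).prod hv = (l.map sP).prod := by
  induction l with
  | nil =>
    simp only [List.map_nil, List.prod_nil]
    exact hatPerm_one
  | cons a l ih =>
    have hfix : ((l.map (· + 1)).map sP).prod 1 = 1 :=
      prod_one_fix (by
        intro b hb
        simp only [List.mem_map] at hb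
        obtain ⟨c, _, rfl⟩ := hb
        exact pnat_succ_ne_one c)
    have hmul := hatPerm_mul (x := sP (a + 1)) (y := ((l.map (· + 1)).map sP).prod)
      (sP_one_fix (pnat_succ_ne_one a)) hfix
    simp only [List.map_cons, List.prod_cons]
    exact hmul.trans (by rw [ih hfix, hatPerm_sP])

lemma invSet_hatPerm (v : Equiv.Perm ℕ+) (hv : v 1 = 1) :
    InvSet v = (fun p : ℕ+ × ℕ+ => (p.1 + 1, p.2 + 1)) '' InvSet (hatPerm v hv) := by
  ext ⟨p, q⟩
  constructor
  · rintro ⟨h1, h2⟩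
    have hp : p ≠ 1 := by
      rintro rfl
      rw [hv] at h2
      exact absurd h2 (not_lt.mpr (PNat.one_le _))
    obtain ⟨p', rfl⟩ := PNat.exists_eq_succ_of_ne_one hp
    have hq : q ≠ 1 := ne_of_gt (lt_of_le_of_lt (PNat.one_le _) (lt_of_le_of_lt le_rfl h1))
    obtain ⟨q', rfl⟩ := PNat.exists_eq_succ_of_ne_one hq
    refine ⟨(p', q'), ⟨?_, ?_⟩, rfl⟩
    · exact lt_of_add_lt_add_right h1
    · rw [hatPerm_lt_iff]; exact h2
  · rintro ⟨⟨p', q'⟩, ⟨h1, h2⟩, heq⟩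
    simp only [Prod.mk.injEq] at heq
    obtain ⟨rfl, rfl⟩ := heq
    refine ⟨add_lt_add_left h1 1, ?_⟩
    rw [← hatPerm_lt_iff v hv]
    exact h2

lemma invNum_hatPerm (v : Equiv.Perm ℕ+) (hv : v 1 = 1) :
    invNum v = invNum (hatPerm v hv) := by
  rw [invNum_eq, invNum_eq, invSet_hatPerm v hv,
    Set.ncard_image_of_injective _ (fun a b hab => by
      simp only [Prod.mk.injEq] at hab
      exact Prod.ext (add_right_cancel hab.1) (add_right_cancel hab.2))]

lemma supp_hatPerm (v : Equiv.Perm ℕ+) (hv : v 1 = 1) (h : {x | v x ≠ x}.Finite) :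
    {x | hatPerm v hv x ≠ x}.Finite := by
  apply Set.Finite.subset (h.image (fun x => x - 1))
  intro n hn
  refine ⟨n + 1, ?_, pnat_succ_sub_one n⟩
  simp only [Set.mem_setOf_eq]
  intro hc
  exact hn (by rw [hatPerm_apply, hc, pnat_succ_sub_one])


/-! ### the cycle permutation -/

def decList : ℕ → List ℕ+
  | 0 => []
  | n + 1 => n.succPNat :: decList n

lemma mem_decList {k : ℕ+} {n : ℕ} : k ∈ decList n ↔ (k : ℕ) ≤ n := by
  induction n with
  | zero => simp only [decList, List.not_mem_nil, false_iff, not_le]; exact k.pos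
  | succ n ih =>
    simp only [decList, List.mem_cons, ih]
    constructor
    · rintro (rfl | h)
      · exact le_rfl
      · omega
    · intro h
      rcases Nat.lt_or_ge (k : ℕ) (n + 1) with h' | h'
      · exact Or.inr (by omega)
      · exact Or.inl (PNat.coe_injective (show (k : ℕ) = n + 1 by omega))

lemma pairwise_decList (n : ℕ) : (decList n).Pairwise (· > ·) := by
  induction n with
  | zero => exact List.Pairwise.nil
  | succ n ih =>
    refine List.Pairwise.cons ?_ ih
    intro b hb
    rw [mem_decList] at hb
    exact (PNat.coe_lt_coe b _).mp (show (b : ℕ) < n + 1 by omega)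

/-- the cycle `s_t s_{t-1} ⋯ s_1` -/
def cpr (t : ℕ) : Equiv.Perm ℕ+ := ((decList t).map sP).prod

lemma cpr_apply_one {t : ℕ+} : cpr (t : ℕ) 1 = t + 1 := by
  apply eval_run (pairwise_decList _)
  · exact fun a _ => pnat_succ_ne_one a
  · intro k _ hk
    rw [mem_decList]
    exact (PNat.coe_le_coe k t).mpr hk
  · intro a ha
    rw [mem_decList] at ha
    intro hcon
    rw [hcon, PNat.add_coe, PNat.one_coe] at ha
    omega
  · exact t.one_le

lemma cpr_apply_succ {t : ℕ} {x : ℕ+} (hx : (x : ℕ) ≤ t) : cpr t (x + 1) = x :=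
  eval_mem (pairwise_decList _) (mem_decList.mpr hx)

lemma cpr_apply_fix {t : ℕ} {x : ℕ+} (hx : t + 1 < (x : ℕ)) : cpr t x = x := by
  apply eval_fix
  intro a ha
  rw [mem_decList] at ha
  constructor
  · intro h; rw [h] at ha; omega
  · intro h
    rw [← h, PNat.add_coe, PNat.one_coe] at hx
    omega

lemma invSet_cpr (t : ℕ+) :
    InvSet (cpr (t : ℕ)) = (fun x : ℕ+ => ((1 : ℕ+), x + 1)) '' {x : ℕ+ | x ≤ t} := by
  ext ⟨p, q⟩
  constructor
  · rintro ⟨h1, h2⟩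
    rcases eq_or_ne p 1 with rfl | hp
    · rw [cpr_apply_one] at h2
      have hq2 : q ≠ 1 := ne_of_gt h1
      obtain ⟨x, rfl⟩ := PNat.exists_eq_succ_of_ne_one hq2
      refine ⟨x, ?_, rfl⟩
      simp only [Set.mem_setOf_eq]
      by_contra hxt
      push_neg at hxt
      have hco : (t : ℕ) + 1 < ((x + 1 : ℕ+) : ℕ) := by
        have := (PNat.coe_lt_coe t x).mpr hxt
        rw [PNat.add_coe, PNat.one_coe]
        omega
      rw [cpr_apply_fix hco] at h2
      exact absurd (lt_of_add_lt_add_right h2) (not_lt.mpr hxt.le)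
    · exfalso
      obtain ⟨p', rfl⟩ := PNat.exists_eq_succ_of_ne_one hp
      have hq : q ≠ 1 := ne_of_gt (lt_trans (lt_of_le_of_lt (PNat.one_le _) (pnat_lt_succ p')) h1)
      obtain ⟨q', rfl⟩ := PNat.exists_eq_succ_of_ne_one hq
      have hpq' : p' < q' := lt_of_add_lt_add_right h1
      have hpq'c : (p' : ℕ) < (q' : ℕ) := (PNat.coe_lt_coe p' q').mpr hpq'
      rcases le_or_gt ((q' : ℕ)) (t : ℕ) with hqt | hqt
      · rw [cpr_apply_succ hqt, cpr_apply_succ (by omega)] at h2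
        exact absurd (lt_trans h2 hpq') (lt_irrefl _)
      · rw [cpr_apply_fix (by rw [PNat.add_coe, PNat.one_coe]; omega)] at h2
        rcases le_or_gt ((p' : ℕ)) (t : ℕ) with hpt | hpt
        · rw [cpr_apply_succ hpt] at h2
          have := (PNat.coe_lt_coe _ _).mpr h2
          rw [PNat.add_coe, PNat.one_coe] at this
          omega
        · rw [cpr_apply_fix (by rw [PNat.add_coe, PNat.one_coe]; omega)] at h2
          exact absurd (lt_trans h2 h1) (lt_irrefl _)
  · rintro ⟨x, hx, heq⟩
    simp only [Set.mem_setOf_eq] at hx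
    simp only [Prod.mk.injEq] at heq
    obtain ⟨rfl, rfl⟩ := heq
    refine ⟨lt_of_le_of_lt (PNat.one_le _) (pnat_lt_succ x), ?_⟩
    rw [cpr_apply_succ ((PNat.coe_le_coe x t).mpr hx), cpr_apply_one]
    exact lt_of_le_of_lt hx (pnat_lt_succ t)

lemma invNum_cpr (t : ℕ+) : invNum (cpr (t : ℕ)) = (t : ℕ) := by
  rw [invNum_eq, invSet_cpr,
    Set.ncard_image_of_injective _ (fun a b hab => by
      simp only [Prod.mk.injEq] at hab
      exact add_right_cancel hab.2)]
  have h1 : {x : ℕ+ | x ≤ t} = ↑(Finset.Icc 1 t) := by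
    ext x
    simp only [Set.mem_setOf_eq, Finset.coe_Icc, Set.mem_Icc]
    exact ⟨fun h => ⟨PNat.one_le x, h⟩, fun h => h.2⟩
  rw [h1, Set.ncard_coe_finset, PNat.card_Icc]
  simp


/-! ### misc cell lemmas -/

lemma list_toFinset_map {α β : Type*} [DecidableEq α] [DecidableEq β] (l : List α) (f : α → β) :
    (l.map f).toFinset = l.toFinset.image f := by
  ext b
  simp only [List.mem_toFinset, List.mem_map, Finset.mem_image]

lemma decList_length (n : ℕ) : (decList n).length = n := by
  induction n with
  | zero => rfl
  | succ n ih => simp [decList, ih]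

lemma pnat_two_le_add (i j : ℕ+) : i + j ≠ 1 := by
  intro h
  have h2 : (i : ℕ) + (j : ℕ) = 1 := by rw [← PNat.add_coe, h, PNat.one_coe]
  have := i.pos
  have := j.pos
  omega

lemma letter_succ (p : ℕ+ × ℕ+) : (p.1 + p.2 - 1) + 1 = p.1 + p.2 :=
  pnat_sub_one_add_one (pnat_two_le_add _ _)

lemma cellTrans_eq_sP (p : ℕ+ × ℕ+) : cellTrans p = sP (p.1 + p.2 - 1) := by
  rw [cellTrans, sP, letter_succ]

lemma cellTrans_row_one (j : ℕ+) : cellTrans ((1 : ℕ+), j) = sP j := by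
  rw [cellTrans_eq_sP]
  congr 1
  show (1 : ℕ+) + j - 1 = j
  rw [add_comm, pnat_succ_sub_one]

def shiftD (p : ℕ+ × ℕ+) : ℕ+ × ℕ+ := (p.1 + 1, p.2)

lemma cellTrans_shiftD (p : ℕ+ × ℕ+) :
    cellTrans (shiftD p) = sP ((p.1 + p.2 - 1) + 1) := by
  rw [cellTrans_eq_sP]
  congr 1
  show p.1 + 1 + p.2 - 1 = p.1 + p.2 - 1 + 1
  rw [letter_succ]
  apply PNat.coe_injective
  rw [PNat.sub_coe, if_pos]
  · push_cast
    omega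
  · rw [← PNat.coe_lt_coe]
    push_cast
    have := p.2.pos
    omega

lemma keyLT_shiftD {p q : ℕ+ × ℕ+} : keyLT (shiftD p) (shiftD q) ↔ keyLT p q := by
  rw [keyLT_iff, keyLT_iff]
  show p.1 + 1 < q.1 + 1 ∨ (p.1 + 1 = q.1 + 1 ∧ q.2 < p.2) ↔ _
  constructor
  · rintro (h | ⟨h1, h2⟩)
    · exact Or.inl (lt_of_add_lt_add_right h)
    · exact Or.inr ⟨add_right_cancel h1, h2⟩
  · rintro (h | ⟨h1, h2⟩)
    · exact Or.inl (add_lt_add_left h 1)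
    · exact Or.inr ⟨by rw [h1], h2⟩

def rowList (t : ℕ) : List (ℕ+ × ℕ+) := (decList t).map (fun j => ((1 : ℕ+), j))

lemma rowList_pairwise (t : ℕ) : (rowList t).Pairwise keyLT := by
  rw [rowList, List.pairwise_map]
  refine List.Pairwise.imp ?_ (pairwise_decList t)
  intro a b hab
  exact keyLT_iff.mpr (Or.inr ⟨rfl, hab⟩)

lemma rowList_prod (t : ℕ) : ((rowList t).map cellTrans).prod = cpr t := by
  rw [rowList, List.map_map, cpr]
  congr 1
  apply List.map_congr_left
  intro j _
  exact cellTrans_row_one j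

lemma rowList_toFinset_card (t : ℕ) : (rowList t).toFinset.card = t := by
  rw [card_toFinset_of_pairwise _ (rowList_pairwise t), rowList, List.length_map,
    decList_length]

lemma mem_rowList_toFinset {t : ℕ} {p : ℕ+ × ℕ+} :
    p ∈ (rowList t).toFinset ↔ p.1 = 1 ∧ (p.2 : ℕ) ≤ t := by
  rw [List.mem_toFinset, rowList, List.mem_map]
  constructor
  · rintro ⟨j, hj, rfl⟩
    exact ⟨rfl, mem_decList.mp hj⟩
  · rintro ⟨h1, h2⟩
    exact ⟨p.2, mem_decList.mpr h2, by rw [← h1]⟩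

lemma pdWord_rowList (t : ℕ) : pdWord (rowList t).toFinset = cpr t := by
  rw [pdWord_of_pairwise _ (rowList_pairwise t), rowList_prod]

lemma list_bound (l : List ℕ+) : ∃ n : ℕ, ∀ x ∈ l, (x : ℕ) ≤ n := by
  induction l with
  | nil => exact ⟨0, fun x hx => absurd hx (List.not_mem_nil)⟩
  | cons a l ih =>
    obtain ⟨n, hn⟩ := ih
    refine ⟨max n (a : ℕ), fun x hx => ?_⟩
    rcases List.mem_cons.mp hx with rfl | hx'
    · exact le_max_right _ _
    · exact le_trans (hn x hx') (le_max_left _ _)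

lemma run_top {jl : List ℕ+} {x : ℕ+} (hx : x ∈ jl) :
    ∃ b : ℕ+, x ≤ b ∧ (∀ k, x ≤ k → k ≤ b → k ∈ jl) ∧ b + 1 ∉ jl := by
  classical
  obtain ⟨n, hn⟩ := list_bound jl
  have hex : ∃ k : ℕ, (⟨(x : ℕ) + k, by have := x.pos; omega⟩ : ℕ+) ∉ jl := by
    refine ⟨n + 1, fun hmem => ?_⟩
    have := hn _ hmem
    simp only [PNat.mk_coe] at this
    have := x.pos
    omega
  set n₀ := Nat.find hex with hn₀
  have hn₀pos : 1 ≤ n₀ := by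
    rcases Nat.eq_zero_or_pos n₀ with h0 | h1
    · exfalso
      have := Nat.find_spec hex
      rw [← hn₀, h0] at this
      apply this
      exact hx
    · exact h1
  refine ⟨⟨(x : ℕ) + n₀ - 1, by have := x.pos; omega⟩, ?_, ?_, ?_⟩
  · apply (PNat.coe_le_coe _ _).mp
    simp only [PNat.mk_coe]
    omega
  · intro k hk1 hk2
    rw [← PNat.coe_le_coe] at hk1
    replace hk2 := (PNat.coe_le_coe _ _).mpr hk2
    simp only [PNat.mk_coe] at hk2
    have hlt : (k : ℕ) - (x : ℕ) < n₀ := by omega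
    have := Nat.find_min hex hlt
    rw [not_not] at this
    refine (congrArg (· ∈ jl) (?_ : k = _)).mpr this
    exact PNat.coe_injective (by simp; omega)
  · have := Nat.find_spec hex
    rw [← hn₀] at this
    refine fun hmem => this ((congrArg (· ∈ jl) (?_ : _ = _)).mp hmem)
    apply PNat.coe_injective
    show (x : ℕ) + n₀ - 1 + 1 = (x : ℕ) + n₀
    have := x.pos
    omega

lemma exists_unshift (l : List (ℕ+ × ℕ+)) (h : ∀ q ∈ l, q.1 ≠ 1) :
    ∃ l' : List (ℕ+ × ℕ+), l = l'.map shiftD := by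
  induction l with
  | nil => exact ⟨[], rfl⟩
  | cons a l ih =>
    obtain ⟨l', rfl⟩ := ih (fun q hq => h q (List.mem_cons_of_mem a hq))
    obtain ⟨i', hi'⟩ := PNat.exists_eq_succ_of_ne_one (h a (List.mem_cons_self))
    exact ⟨(i', a.2) :: l', by rw [List.map_cons]; congr 1; rw [shiftD, ← hi']⟩


/-! ### avoidance and inverse-cycle facts -/

def Av (W : Equiv.Perm ℕ+) : Prop :=
  ¬ ∃ a b c : ℕ+, a < b ∧ b < c ∧ W a < W c ∧ W c < W b

lemma hatPerm_congr {x y : Equiv.Perm ℕ+} (h : x = y) (hx : x 1 = 1) (hy : y 1 = 1) :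
    hatPerm x hx = hatPerm y hy := by subst h; rfl

lemma pnat_one_lt_of_ne {x : ℕ+} (h : x ≠ 1) : 1 < x :=
  lt_of_le_of_ne (PNat.one_le x) (Ne.symm h)

lemma invSet_cpr_finite (t : ℕ+) : (InvSet (cpr (t : ℕ))).Finite := by
  rw [invSet_cpr]
  exact (Set.finite_Iic t).image _

lemma exists_inversion {W : Equiv.Perm ℕ+} (hfin : {x | W x ≠ x}.Finite) (hW : W ≠ 1) :
    ∃ p q : ℕ+, p < q ∧ W q < W p := by
  have hne : {x | W x ≠ x}.Nonempty := by
    by_contra h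
    rw [Set.not_nonempty_iff_eq_empty] at h
    refine hW (Equiv.ext (fun x => ?_))
    by_contra hx
    have hmem : x ∈ {y | W y ≠ y} := hx
    rw [h] at hmem
    exact hmem
  obtain ⟨m, hm, hmax0⟩ := Set.Finite.exists_maximalFor id _ hfin hne
  have hmax : ∀ x ∈ {x | W x ≠ x}, m ≤ x → m = x := fun x hx h => le_antisymm h (hmax0 hx h)
  have hle : ∀ x, x ∈ {y | W y ≠ y} → x ≤ m := by
    intro x hx
    by_contra hlt
    push_neg at hlt
    exact absurd (hmax x hx hlt.le) (ne_of_lt hlt)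
  have hm' : W m ≠ m := hm
  have hWm : W m < m := by
    rcases lt_trichotomy (W m) m with h | h | h
    · exact h
    · exact absurd h hm'
    · exfalso
      have hnotin : W m ∉ {y | W y ≠ y} := fun hmem => absurd (hle _ hmem) (not_le.mpr h)
      simp only [Set.mem_setOf_eq, not_not] at hnotin
      exact hm' (W.injective hnotin)
  have hne2 : W⁻¹ m ≠ m := fun h => hm' ((congrArg W h).symm.trans (W.apply_inv_self m))
  have hp : W⁻¹ m < m := by
    rcases lt_trichotomy (W⁻¹ m) m with h | h | h
    · exact h
    · exact absurd h hne2
    · exfalso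
      have hmem : W⁻¹ m ∈ {y | W y ≠ y} := by
        simp only [Set.mem_setOf_eq, Equiv.Perm.apply_inv_self]
        exact ne_of_lt h
      exact absurd (hle _ hmem) (not_le.mpr h)
  exact ⟨W⁻¹ m, m, hp, by rw [Equiv.Perm.apply_inv_self]; exact hWm⟩

lemma W1_ne_one {W : Equiv.Perm ℕ+} (hfin : {x | W x ≠ x}.Finite) (hAv : Av W)
    (hW : W ≠ 1) : W 1 ≠ 1 := by
  intro h1
  obtain ⟨p, q, hpq, hinv⟩ := exists_inversion hfin hW
  have hp1 : p ≠ 1 := by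
    intro h
    rw [h, h1] at hinv
    exact absurd hinv (not_lt.mpr (PNat.one_le _))
  have hq1 : q ≠ 1 := ne_of_gt (lt_trans (pnat_one_lt_of_ne hp1) hpq)
  apply hAv
  refine ⟨1, p, q, pnat_one_lt_of_ne hp1, hpq, ?_, hinv⟩
  rw [h1]
  exact pnat_one_lt_of_ne (fun h => hq1 (W.injective (h.trans h1.symm)))

lemma cpr_inv_small {t : ℕ} {u : ℕ+} (hu : (u : ℕ) ≤ t) : (cpr t)⁻¹ u = u + 1 :=
  (cpr t).injective (by rw [Equiv.Perm.apply_inv_self, cpr_apply_succ hu])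

lemma cpr_inv_big {t : ℕ} {u : ℕ+} (hu : t + 1 < (u : ℕ)) : (cpr t)⁻¹ u = u :=
  (cpr t).injective (by rw [Equiv.Perm.apply_inv_self, cpr_apply_fix hu])

lemma cpr_inv_lt {t : ℕ+} {u w : ℕ+} (hu : u ≠ t + 1) (hw : w ≠ t + 1) (huw : u < w) :
    (cpr (t : ℕ))⁻¹ u < (cpr (t : ℕ))⁻¹ w := by
  have huc : (u : ℕ) ≠ (t : ℕ) + 1 := by
    intro h; exact hu (PNat.coe_injective (by rw [h, PNat.add_coe, PNat.one_coe]))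
  have hwc : (w : ℕ) ≠ (t : ℕ) + 1 := by
    intro h; exact hw (PNat.coe_injective (by rw [h, PNat.add_coe, PNat.one_coe]))
  have huwc : (u : ℕ) < (w : ℕ) := (PNat.coe_lt_coe u w).mpr huw
  rcases le_or_gt (u : ℕ) (t : ℕ) with hus | hub
  · rw [cpr_inv_small hus]
    rcases le_or_gt (w : ℕ) (t : ℕ) with hws | hwb
    · rw [cpr_inv_small hws]
      exact add_lt_add_left huw 1
    · rw [cpr_inv_big (by omega)]
      rw [← PNat.coe_lt_coe, PNat.add_coe, PNat.one_coe]
      omega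
  · have hub' : (t : ℕ) + 1 < (u : ℕ) := by omega
    rw [cpr_inv_big hub', cpr_inv_big (by omega)]
    exact huw


/-! ### the main uniqueness theorem -/

theorem pd_exists_unique : ∀ N : ℕ, ∀ W : Equiv.Perm ℕ+,
    {x | W x ≠ x}.Finite → Av W → invNum W = N →
    ∃! D : Finset (ℕ+ × ℕ+), IsPipeDream W D := by
  intro N
  induction N using Nat.strong_induction_on with
  | _ N IH =>
  intro W hfin hAv hinv
  rcases eq_or_ne W 1 with rfl | hWne1
  · refine ⟨∅, ⟨?_, ?_⟩, ?_⟩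
    · rw [Finset.card_empty, invNum_one]
    · have h := pdWord_of_pairwise [] List.Pairwise.nil
      simpa using h
    · rintro D ⟨hc, -⟩
      rw [invNum_one] at hc
      exact Finset.card_eq_zero.mp hc
  · have hW1ne : W 1 ≠ 1 := W1_ne_one hfin hAv hWne1
    obtain ⟨t, ht⟩ := PNat.exists_eq_succ_of_ne_one hW1ne
    set c : Equiv.Perm ℕ+ := cpr (t : ℕ) with hc
    set v : Equiv.Perm ℕ+ := c⁻¹ * W with hv
    have hcv : c * v = W := by rw [hv, mul_inv_cancel_left]
    have hv1 : v 1 = 1 := by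
      show c⁻¹ (W 1) = 1
      rw [ht, hc, ← cpr_apply_one (t := t)]
      exact Equiv.Perm.inv_apply_self _ _
    have hsuppc : {x | c x ≠ x}.Finite := supp_prod _
    have hsuppv : {x | v x ≠ x}.Finite := by
      apply Set.Finite.subset (Set.Finite.union (s := {x | c⁻¹ x ≠ x}) ?_ hfin)
      · exact supp_mul _ _
      · rw [supp_inv]; exact hsuppc
    have hfinc : (InvSet c).Finite := invSet_cpr_finite t
    have hfinv : (InvSet v).Finite := invSet_finite_of_support hsuppv
    have hvinv1 : v⁻¹ 1 = 1 := by rw [← hv1, Equiv.Perm.inv_apply_self, hv1]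
    have hgood : ∀ α β : ℕ+, α < β → c β < c α → v⁻¹ α < v⁻¹ β := by
      intro α β h1 h2
      have hmem : (α, β) ∈ InvSet c := ⟨h1, h2⟩
      rw [hc, invSet_cpr] at hmem
      obtain ⟨x, -, heq⟩ := hmem
      simp only [Prod.mk.injEq] at heq
      obtain ⟨rfl, rfl⟩ := heq
      rw [hvinv1]
      exact pnat_one_lt_of_ne (fun h => pnat_succ_ne_one x
        ((v.apply_inv_self (x + 1)).symm.trans ((congrArg v h).trans hv1)))
    have hadd : invNum W = (t : ℕ) + invNum v := by
      rw [← hcv, inv_add_of_good hfinc hfinv hgood, hc, invNum_cpr]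
    set Wn := hatPerm v hv1 with hWn
    have hinvWn : invNum Wn = invNum v := (invNum_hatPerm v hv1).symm
    have hsuppWn : {x | Wn x ≠ x}.Finite := supp_hatPerm v hv1 hsuppv
    have hWne : ∀ x : ℕ+, x ≠ 1 → W x ≠ t + 1 :=
      fun x hx h => hx (W.injective (h.trans ht.symm))
    have hvW_lt : ∀ x y : ℕ+, x ≠ 1 → y ≠ 1 → (W x < W y ↔ v x < v y) := by
      intro x y hx hy
      constructor
      · intro h
        exact cpr_inv_lt (hWne x hx) (hWne y hy) h
      · intro h
        rcases lt_trichotomy (W x) (W y) with h' | h' | h'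
        · exact h'
        · exact absurd (congrArg (⇑c⁻¹) h' : v x = v y) (ne_of_lt h)
        · exact absurd (cpr_inv_lt (hWne y hy) (hWne x hx) h' : v y < v x) (not_lt.mpr h.le)
    have hAvWn : Av Wn := by
      rintro ⟨a, b, d, hab, hbd, h1, h2⟩
      apply hAv
      refine ⟨a + 1, b + 1, d + 1, add_lt_add_left hab 1, add_lt_add_left hbd 1, ?_, ?_⟩
      · rw [hvW_lt _ _ (pnat_succ_ne_one a) (pnat_succ_ne_one d)]
        rw [← hatPerm_lt_iff v hv1]
        exact h1
      · rw [hvW_lt _ _ (pnat_succ_ne_one d) (pnat_succ_ne_one b)]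
        rw [← hatPerm_lt_iff v hv1]
        exact h2
    have hlt : invNum Wn < N := by
      have := t.pos
      omega
    obtain ⟨D₀, hD₀, hD₀uniq⟩ := IH _ hlt Wn hsuppWn hAvWn rfl
    refine ⟨(rowList (t : ℕ)).toFinset ∪ D₀.image shiftD, ?_, ?_⟩
    · -- existence
      obtain ⟨l', hl'p, hl'f⟩ := exists_pairwise_list D₀
      have hlp : (rowList (t : ℕ) ++ l'.map shiftD).Pairwise keyLT := by
        rw [List.pairwise_append]
        refine ⟨rowList_pairwise _, ?_, ?_⟩
        · rw [List.pairwise_map]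
          refine List.Pairwise.imp ?_ hl'p
          intro a b hab
          exact keyLT_shiftD.mpr hab
        · intro p hp q hq
          rw [rowList, List.mem_map] at hp
          obtain ⟨j, -, rfl⟩ := hp
          rw [List.mem_map] at hq
          obtain ⟨r, -, rfl⟩ := hq
          exact keyLT_iff.mpr (Or.inl (lt_of_le_of_lt (PNat.one_le r.1) (pnat_lt_succ r.1)))
      have hftoF : (rowList (t : ℕ) ++ l'.map shiftD).toFinset
          = (rowList (t : ℕ)).toFinset ∪ D₀.image shiftD := by
        rw [List.toFinset_append, list_toFinset_map, hl'f]
      constructor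
      · -- card
        have hcard : ((rowList (t : ℕ)).toFinset ∪ D₀.image shiftD).card
            = (t : ℕ) + D₀.card := by
          rw [← hftoF, card_toFinset_of_pairwise _ hlp, List.length_append, List.length_map]
          congr 1
          · rw [rowList, List.length_map, decList_length]
          · rw [← card_toFinset_of_pairwise _ hl'p, hl'f]
        rw [hcard, hD₀.1, hinvWn, hadd]
      · -- word
        have hword : pdWord ((rowList (t : ℕ)).toFinset ∪ D₀.image shiftD)
            = ((rowList (t : ℕ)).map cellTrans).prod * ((l'.map shiftD).map cellTrans).prod := by
          rw [← hftoF, pdWord_of_pairwise _ hlp, List.map_append, List.prod_append]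
        rw [hword, rowList_prod]
        set jl := l'.map (fun q : ℕ+ × ℕ+ => q.1 + q.2 - 1) with hjl
        have hmap1 : (l'.map shiftD).map cellTrans = (jl.map (· + 1)).map sP := by
          rw [hjl, List.map_map, List.map_map, List.map_map]
          apply List.map_congr_left
          intro q _
          exact cellTrans_shiftD q
        have hfix0 : ((jl.map (· + 1)).map sP).prod 1 = 1 := by
          apply prod_one_fix
          intro a ha
          rw [List.mem_map] at ha
          obtain ⟨b, -, rfl⟩ := ha
          exact pnat_succ_ne_one b
        have hhat : hatPerm _ hfix0 = (jl.map sP).prod := hatPerm_prod jl hfix0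
        have hjlsP : jl.map sP = l'.map cellTrans := by
          rw [hjl, List.map_map]
          apply List.map_congr_left
          intro q _
          exact (cellTrans_eq_sP q).symm
        have hpd0 : (jl.map sP).prod = Wn := by
          rw [hjlsP, ← pdWord_of_pairwise _ hl'p, hl'f]
          exact hD₀.2
        have hveq : ((jl.map (· + 1)).map sP).prod = v :=
          hatPerm_injective hfix0 hv1 (by rw [hhat, hpd0, hWn])
        rw [hmap1, hveq, hcv]
    · -- uniqueness
      rintro D ⟨hDcard, hDword⟩
      classical
      set Row := D.filter (fun p => p.1 = 1) with hRowdef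
      set Rest := D.filter (fun p => ¬ p.1 = 1) with hRestdef
      have hsplitU : Row ∪ Rest = D := Finset.filter_union_filter_not_eq _ D
      have hsplitC : Row.card + Rest.card = D.card :=
        Finset.card_filter_add_card_filter_not _
      obtain ⟨lr, hlrp, hlrf⟩ := exists_pairwise_list Row
      obtain ⟨ls, hlsp, hlsf⟩ := exists_pairwise_list Rest
      have hlr1 : ∀ p ∈ lr, p.1 = 1 := by
        intro p hp
        have hmem : p ∈ Row := by rw [← hlrf]; exact List.mem_toFinset.mpr hp
        exact (Finset.mem_filter.mp hmem).2
      have hls1 : ∀ p ∈ ls, p.1 ≠ 1 := by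
        intro p hp
        have hmem : p ∈ Rest := by rw [← hlsf]; exact List.mem_toFinset.mpr hp
        exact (Finset.mem_filter.mp hmem).2
      have hLp : (lr ++ ls).Pairwise keyLT := by
        rw [List.pairwise_append]
        refine ⟨hlrp, hlsp, ?_⟩
        intro p hp q hq
        refine keyLT_iff.mpr (Or.inl ?_)
        rw [hlr1 p hp]
        exact pnat_one_lt_of_ne (hls1 q hq)
      have hLf : (lr ++ ls).toFinset = D := by
        rw [List.toFinset_append, hlrf, hlsf, hsplitU]
      have hDsplit : W = (lr.map cellTrans).prod * (ls.map cellTrans).prod := by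
        rw [← hDword, ← hLf, pdWord_of_pairwise _ hLp, List.map_append, List.prod_append]
      set jlist := lr.map Prod.snd with hjlist
      have hjp : jlist.Pairwise (· > ·) := by
        rw [hjlist, List.pairwise_map]
        refine List.Pairwise.imp_of_mem ?_ hlrp
        intro p q hp hq hpq
        rcases keyLT_iff.mp hpq with h | ⟨-, h⟩
        · rw [hlr1 p hp, hlr1 q hq] at h
          exact absurd h (lt_irrefl _)
        · exact h
      have hlrmap : lr.map cellTrans = jlist.map sP := by
        rw [hjlist, List.map_map]
        apply List.map_congr_left
        intro q hq
        have hq1 : q = ((1 : ℕ+), q.2) := Prod.ext (hlr1 q hq) rfl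
        rw [show cellTrans q = cellTrans ((1 : ℕ+), q.2) from by rw [← hq1]]
        exact cellTrans_row_one q.2
      set R := (jlist.map sP).prod with hRdef
      set v₁ := (ls.map cellTrans).prod with hv₁def
      obtain ⟨l'', hl''⟩ := exists_unshift ls hls1
      have hl''p : l''.Pairwise keyLT := by
        have h0 := hlsp
        rw [hl'', List.pairwise_map] at h0
        refine List.Pairwise.imp ?_ h0
        intro a b hab
        exact keyLT_shiftD.mp hab
      set jl2 := l''.map (fun q : ℕ+ × ℕ+ => q.1 + q.2 - 1) with hjl2
      have hlsmap : ls.map cellTrans = (jl2.map (· + 1)).map sP := by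
        rw [hl'', hjl2, List.map_map, List.map_map, List.map_map]
        apply List.map_congr_left
        intro q _
        exact cellTrans_shiftD q
      have hfix1 : v₁ 1 = 1 := by
        rw [hv₁def, hlsmap]
        apply prod_one_fix
        intro a ha
        rw [List.mem_map] at ha
        obtain ⟨b, -, rfl⟩ := ha
        exact pnat_succ_ne_one b
      have hWR : R * v₁ = W := by
        rw [hRdef, ← hlrmap, hv₁def]
        exact hDsplit.symm
      obtain ⟨hfinR0, hlenR0⟩ := prodSwaps_facts jlist
      have hfinR : (InvSet R).Finite := hfinR0
      have hlenR : invNum R ≤ jlist.length := hlenR0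
      have hv₁facts : (InvSet v₁).Finite ∧ invNum v₁ ≤ (jl2.map (· + 1)).length := by
        rw [hv₁def, hlsmap]
        exact prodSwaps_facts _
      obtain ⟨hfinv₁, hlenv₁⟩ := hv₁facts
      have hcardRow : Row.card = jlist.length := by
        rw [hjlist, List.length_map, ← hlrf, card_toFinset_of_pairwise _ hlrp]
      have hcardRest : Rest.card = (jl2.map (· + 1)).length := by
        rw [List.length_map, hjl2, List.length_map, ← hlsf,
          card_toFinset_of_pairwise _ hlsp, hl'', List.length_map]
      have hle1 : invNum W ≤ invNum R + invNum v₁ := by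
        rw [← hWR]
        exact inv_le_add hfinR hfinv₁
      have hEqadd : invNum R + invNum v₁ ≤ invNum (R * v₁) := by
        rw [hWR]
        omega
      have hgood₂ : ∀ α β : ℕ+, α < β → R β < R α → v₁⁻¹ α < v₁⁻¹ β :=
        good_of_inv_add hfinR hfinv₁ hEqadd
      have hW1R : W 1 = R 1 := by
        rw [← hWR]
        show R (v₁ 1) = R 1
        rw [hfix1]
      have h1mem : (1 : ℕ+) ∈ jlist := by
        by_contra h1m
        have hfix : R 1 = 1 :=
          eval_fix (fun a ha => ⟨fun h => h1m (h ▸ ha), pnat_succ_ne_one a⟩)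
        exact pnat_succ_ne_one t (ht.symm.trans (hW1R.trans hfix))
      obtain ⟨b, h1b, hbrun, hbnot⟩ := run_top h1mem
      have hW1b : W 1 = b + 1 := by
        rw [hW1R]
        exact eval_run hjp (fun a _ => pnat_succ_ne_one a) hbrun
          (fun a ha heq => hbnot (heq ▸ ha)) h1b
      have hbt : b = t := add_right_cancel (hW1b.symm.trans ht)
      subst hbt
      have hjsub : ∀ x ∈ jlist, x ≤ b := by
        by_contra hcon
        push_neg at hcon
        obtain ⟨x₀, hx₀m, hx₀t⟩ := hcon
        set Jbig := jlist.toFinset.filter (fun y => b < y) with hJbig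
        have hne : Jbig.Nonempty :=
          ⟨x₀, Finset.mem_filter.mpr ⟨List.mem_toFinset.mpr hx₀m, hx₀t⟩⟩
        set a := Jbig.min' hne with ha
        have haP := Finset.mem_filter.mp (Jbig.min'_mem hne)
        have ham : a ∈ jlist := List.mem_toFinset.mp haP.1
        have hat : b < a := haP.2
        have hamin : ∀ y ∈ jlist, b < y → a ≤ y := fun y hy hty =>
          Finset.min'_le _ _ (Finset.mem_filter.mpr ⟨List.mem_toFinset.mpr hy, hty⟩)
        have hat1 : b + 1 < a :=
          lt_of_le_of_ne (PNat.add_one_le_iff.mpr hat) (fun h => hbnot (h ▸ ham))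
        have hnopred : ∀ y ∈ jlist, y + 1 ≠ a := by
          intro y hy heq
          have hty : b < y := lt_of_add_lt_add_right (heq ▸ hat1 : b + 1 < y + 1)
          have hay : a ≤ y := hamin y hy hty
          rw [← heq] at hay
          exact absurd hay (not_le.mpr (pnat_lt_succ y))
        obtain ⟨b₂, hab₂, hrun₂, hb₂not⟩ := run_top ham
        have hRa : R a = b₂ + 1 :=
          eval_run hjp hnopred hrun₂ (fun y hy heq => hb₂not (heq ▸ hy)) hab₂
        have hRb : R (b₂ + 1) = b₂ := eval_mem hjp (hrun₂ b₂ hab₂ le_rfl)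
        have hgp := hgood₂ a (b₂ + 1) (lt_of_le_of_lt hab₂ (pnat_lt_succ _))
          (by rw [hRa, hRb]; exact pnat_lt_succ _)
        have hp1 : v₁⁻¹ a ≠ 1 := by
          intro h
          have h2 : a = v₁ 1 := by rw [← h, Equiv.Perm.apply_inv_self]
          rw [hfix1] at h2
          exact absurd (h2 ▸ hat1) (not_lt.mpr (PNat.one_le _))
        have hWp : W (v₁⁻¹ a) = b₂ + 1 := by
          rw [← hWR]
          show R (v₁ (v₁⁻¹ a)) = _
          rw [Equiv.Perm.apply_inv_self, hRa]
        have hWq : W (v₁⁻¹ (b₂ + 1)) = b₂ := by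
          rw [← hWR]
          show R (v₁ (v₁⁻¹ _)) = _
          rw [Equiv.Perm.apply_inv_self, hRb]
        apply hAv
        refine ⟨1, v₁⁻¹ a, v₁⁻¹ (b₂ + 1), pnat_one_lt_of_ne hp1, hgp, ?_, ?_⟩
        · rw [ht, hWq]
          exact lt_of_lt_of_le hat1 hab₂
        · rw [hWq, hWp]
          exact pnat_lt_succ b₂
      have hjiff : ∀ x : ℕ+, x ∈ jlist ↔ ((1 : ℕ+), x) ∈ Row := by
        intro x
        constructor
        · intro hx
          rw [hjlist, List.mem_map] at hx
          obtain ⟨q, hq, rfl⟩ := hx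
          have hq1 : q = ((1 : ℕ+), q.2) := Prod.ext (hlr1 q hq) rfl
          rw [← hq1, ← hlrf]
          exact List.mem_toFinset.mpr hq
        · intro hx
          have hmem : ((1 : ℕ+), x) ∈ lr := by
            rw [← List.mem_toFinset, hlrf]
            exact hx
          rw [hjlist, List.mem_map]
          exact ⟨_, hmem, rfl⟩
      have hRowEq : Row = (rowList (b : ℕ)).toFinset := by
        ext p
        rw [mem_rowList_toFinset]
        constructor
        · intro hp
          have h1 : p.1 = 1 := (Finset.mem_filter.mp hp).2
          have h2 : p.2 ∈ jlist := by
            rw [hjiff]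
            have hpe : p = ((1 : ℕ+), p.2) := Prod.ext h1 rfl
            rw [← hpe]
            exact hp
          exact ⟨h1, (PNat.coe_le_coe _ _).mpr (hjsub _ h2)⟩
        · rintro ⟨h1, h2⟩
          have h3 : p.2 ∈ jlist := hbrun p.2 (PNat.one_le _) ((PNat.coe_le_coe _ _).mp h2)
          have h4 := (hjiff p.2).mp h3
          have hpe : p = ((1 : ℕ+), p.2) := Prod.ext h1 rfl
          rw [hpe]
          exact h4
      have hReqc : R = c := by
        rw [hRdef, ← hlrmap, ← pdWord_of_pairwise _ hlrp, hlrf, hRowEq, pdWord_rowList, hc]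
      have hv₁v : v₁ = v := by
        have h5 : c * v₁ = c * v := by
          rw [← hReqc, hWR, hReqc]
          exact hcv.symm
        exact mul_left_cancel h5
      have hpdD'' : pdWord l''.toFinset = Wn := by
        rw [pdWord_of_pairwise _ hl''p]
        have hjl2c : l''.map cellTrans = jl2.map sP := by
          rw [hjl2, List.map_map]
          apply List.map_congr_left
          intro q _
          exact cellTrans_eq_sP q
        have hfix2 : ((jl2.map (· + 1)).map sP).prod 1 = 1 := by
          rw [← hlsmap, ← hv₁def]
          exact hfix1
        have hhat2 : hatPerm v₁ hfix1 = (jl2.map sP).prod :=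
          (hatPerm_congr (by rw [hv₁def, hlsmap]) hfix1 hfix2).trans (hatPerm_prod jl2 hfix2)
        rw [hjl2c, ← hhat2, hWn]
        exact hatPerm_congr hv₁v hfix1 hv1
      have hcardD'' : l''.toFinset.card = invNum Wn := by
        rw [card_toFinset_of_pairwise _ hl''p]
        have h1 : ls.length = l''.length := by rw [hl'', List.length_map]
        have h2 : Rest.card = ls.length := by
          rw [← hlsf, card_toFinset_of_pairwise _ hlsp]
        have h3 : Row.card = (b : ℕ) := by rw [hRowEq, rowList_toFinset_card]
        omega
      have hD''eq : l''.toFinset = D₀ := hD₀uniq _ ⟨hcardD'', hpdD''⟩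
      have hRestEq : Rest = D₀.image shiftD := by
        rw [← hD''eq, ← list_toFinset_map, ← hl'', hlsf]
      rw [← hsplitU, hRowEq, hRestEq]


/-! ### bridge to Fin n -/

lemma extendPerm_fix {n : ℕ} (w : Equiv.Perm (Fin n)) {x : ℕ+} (hx : n < (x : ℕ)) :
    extendPerm w x = x :=
  Equiv.Perm.extendDomain_apply_not_subtype w (finPNatEquiv n) (not_le.mpr hx)

lemma extendPerm_apply {n : ℕ} (w : Equiv.Perm (Fin n)) {x : ℕ+} (hx : (x : ℕ) ≤ n) :
    extendPerm w x = ((finPNatEquiv n) (w ((finPNatEquiv n).symm ⟨x, hx⟩))).val :=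
  Equiv.Perm.extendDomain_apply_subtype w (finPNatEquiv n) hx

lemma extendPerm_le {n : ℕ} (w : Equiv.Perm (Fin n)) {x : ℕ+} (hx : (x : ℕ) ≤ n) :
    ((extendPerm w x : ℕ+) : ℕ) ≤ n := by
  rw [extendPerm_apply w hx]
  exact ((finPNatEquiv n) (w ((finPNatEquiv n).symm ⟨x, hx⟩))).2

lemma finPNatEquiv_val_lt {n : ℕ} (i j : Fin n) :
    ((finPNatEquiv n i).val < (finPNatEquiv n j).val) ↔ i < j := by
  show (⟨(i : ℕ) + 1, Nat.succ_pos _⟩ : ℕ+) < ⟨(j : ℕ) + 1, Nat.succ_pos _⟩ ↔ i < j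
  refine (PNat.coe_lt_coe _ _).symm.trans ?_
  simp only [PNat.mk_coe]
  rw [Fin.lt_def]
  omega

lemma extendPerm_supp {n : ℕ} (w : Equiv.Perm (Fin n)) :
    {x : ℕ+ | extendPerm w x ≠ x}.Finite := by
  apply Set.Finite.subset (Set.finite_Iic (α := ℕ+) ⟨n + 1, Nat.succ_pos _⟩)
  intro x hx
  apply Set.mem_Iic.mpr
  apply (PNat.coe_le_coe _ _).mp
  simp only [PNat.mk_coe]
  by_contra hc
  push_neg at hc
  exact hx (extendPerm_fix w (by omega))

lemma av_extend {n : ℕ} (w : Equiv.Perm (Fin n))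
    (hw : ¬ ∃ x y z : Fin n, x < y ∧ y < z ∧ w x < w z ∧ w z < w y) :
    Av (extendPerm w) := by
  rintro ⟨x, y, z, hxy, hyz, h1, h2⟩
  have hz : (z : ℕ) ≤ n := by
    by_contra hzc
    push_neg at hzc
    have hWz : extendPerm w z = z := extendPerm_fix w hzc
    rcases le_or_gt ((y : ℕ)) n with hy | hy
    · have hle := extendPerm_le w hy
      rw [hWz] at h2
      have := (PNat.coe_lt_coe _ _).mpr h2
      omega
    · have hWy : extendPerm w y = y := extendPerm_fix w hy
      rw [hWz, hWy] at h2
      exact absurd hyz (not_lt.mpr h2.le)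
  have hy : (y : ℕ) ≤ n := le_trans (le_of_lt ((PNat.coe_lt_coe _ _).mpr hyz)) hz
  have hx : (x : ℕ) ≤ n := le_trans (le_of_lt ((PNat.coe_lt_coe _ _).mpr hxy)) hy
  set E := finPNatEquiv n with hE
  set i := E.symm ⟨x, hx⟩ with hi
  set j := E.symm ⟨y, hy⟩ with hj
  set k := E.symm ⟨z, hz⟩ with hk
  have hxi : (E i).val = x := congrArg Subtype.val (E.apply_symm_apply ⟨x, hx⟩)
  have hyj : (E j).val = y := congrArg Subtype.val (E.apply_symm_apply ⟨y, hy⟩)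
  have hzk : (E k).val = z := congrArg Subtype.val (E.apply_symm_apply ⟨z, hz⟩)
  have hWx : extendPerm w x = (E (w i)).val := extendPerm_apply w hx
  have hWy : extendPerm w y = (E (w j)).val := extendPerm_apply w hy
  have hWz : extendPerm w z = (E (w k)).val := extendPerm_apply w hz
  apply hw
  refine ⟨i, j, k, ?_, ?_, ?_, ?_⟩
  · rw [← finPNatEquiv_val_lt, hxi, hyj]; exact hxy
  · rw [← finPNatEquiv_val_lt, hyj, hzk]; exact hyz
  · rw [← finPNatEquiv_val_lt]
    rw [hWx, hWz] at h1
    exact h1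
  · rw [← finPNatEquiv_val_lt]
    rw [hWz, hWy] at h2
    exact h2

lemma nu_eq_one {n : ℕ} (w : Equiv.Perm (Fin n))
    (hw : ¬ ∃ x y z : Fin n, x < y ∧ y < z ∧ w x < w z ∧ w z < w y) :
    nu (extendPerm w) = 1 := by
  obtain ⟨D₀, hD₀, huniq⟩ := pd_exists_unique (invNum (extendPerm w)) (extendPerm w)
    (extendPerm_supp w) (av_extend w hw) rfl
  have hset : {D : Finset (ℕ+ × ℕ+) | IsPipeDream (extendPerm w) D} = {D₀} :=
    Set.ext (fun D => ⟨fun h => huniq D h, fun h => h ▸ hD₀⟩)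
  show Set.ncard {D : Finset (ℕ+ × ℕ+) | IsPipeDream (extendPerm w) D} = 1
  rw [hset, Set.ncard_singleton]

lemma pattern_avoid_trans {m n : ℕ} (u : Equiv.Perm (Fin m)) (w : Equiv.Perm (Fin n))
    (hocc : pOcc u w ≠ 0)
    (hw : ¬ ∃ x y z : Fin n, x < y ∧ y < z ∧ w x < w z ∧ w z < w y) :
    ¬ ∃ x y z : Fin m, x < y ∧ y < z ∧ u x < u z ∧ u z < u y := by
  rintro ⟨x, y, z, hxy, hyz, h1, h2⟩
  have hne : {a : Fin m → Fin n | StrictMono a ∧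
      ∀ i j : Fin m, i < j → (w (a i) < w (a j) ↔ u i < u j)}.Nonempty := by
    by_contra hc
    rw [Set.not_nonempty_iff_eq_empty] at hc
    exact hocc (by rw [pOcc, hc, Set.ncard_empty])
  obtain ⟨a, hmono, hiff⟩ := hne
  apply hw
  refine ⟨a x, a y, a z, hmono hxy, hmono hyz, ?_, ?_⟩
  · exact (hiff x z (lt_trans hxy hyz)).mpr h1
  · have hne2 : w (a z) ≠ w (a y) := fun h =>
      absurd (hmono.injective (w.injective h)) (ne_of_gt hyz)
    rcases lt_or_ge (w (a z)) (w (a y)) with h | h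
    · exact h
    · exfalso
      rcases lt_or_eq_of_le h with h' | h'
      · exact absurd ((hiff y z hyz).mp h') (not_lt.mpr h2.le)
      · exact hne2 h'.symm

/-- if `c(w) = ν(w) - 1 - Σ_{m=1}^{n-1} Σ_{u ∈ S_m} c(u) p_u(w)` for all
`w ∈ S_n`, `n ≥ 1`, then `c(w) = 0` whenever `w` avoids the pattern 132. -/
theorem c_eq_zero_of_avoids_132 (c : (m : ℕ) → Equiv.Perm (Fin m) → ℤ)
    (hc : ∀ (n : ℕ), 1 ≤ n → ∀ w : Equiv.Perm (Fin n),
      c n w = (nu (extendPerm w) : ℤ) - 1 -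
        ∑ m ∈ Finset.Icc 1 (n - 1), ∑ u : Equiv.Perm (Fin m), c m u * (pOcc u w : ℤ)) :
    ∀ (n : ℕ), 1 ≤ n → ∀ w : Equiv.Perm (Fin n),
      (¬ ∃ x y z : Fin n, x < y ∧ y < z ∧ w x < w z ∧ w z < w y) →
      c n w = 0 := by
  intro n
  induction n using Nat.strong_induction_on with
  | _ n IH =>
  intro hn w hw
  rw [hc n hn w, nu_eq_one w hw]
  have hsum : ∑ m ∈ Finset.Icc 1 (n - 1), ∑ u : Equiv.Perm (Fin m), c m u * (pOcc u w : ℤ) = 0 := by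
    apply Finset.sum_eq_zero
    intro m hm
    apply Finset.sum_eq_zero
    intro u _
    rcases eq_or_ne (pOcc u w) 0 with h0 | h0
    · rw [h0]
      simp
    · rw [IH m (by rw [Finset.mem_Icc] at hm; omega)
        (by rw [Finset.mem_Icc] at hm; exact hm.1) u (pattern_avoid_trans u w h0 hw)]
      ring
  rw [hsum]
  ring
end

section
/- For every permutation w of the positive integers with only finitely many non-fixed points, the bottom pipe dream B_w = {(i,j) : 1 ≤ j ≤ code(w)_i} is a pipe dream of w. -/
section PipeAux

def padd (a : ℕ+) (n : ℕ) : ℕ+ := ⟨a + n, Nat.lt_of_lt_of_le a.2 (Nat.le_add_right _ _)⟩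
@[simp] lemma padd_coe (a : ℕ+) (n : ℕ) : (padd a n : ℕ) = a + n := rfl
def pn (c : ℕ) : ℕ+ := ⟨c+1, Nat.succ_pos c⟩
@[simp] lemma pn_coe (c : ℕ) : (pn c : ℕ) = c + 1 := rfl

lemma padd_ne {a : ℕ+} {m n : ℕ} (h : m ≠ n) : padd a m ≠ padd a n := by
  intro he; have := congrArg PNat.val he; simp at this; omega
lemma ne_padd_of_lt {a x : ℕ+} (n : ℕ) (h : x < a) : x ≠ padd a n := by
  intro he; rw [← PNat.coe_lt_coe] at h; have := congrArg PNat.val he; simp at this; omega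
lemma ne_padd_of_gt {a x : ℕ+} {n : ℕ} (h : (a:ℕ) + n < (x:ℕ)) : x ≠ padd a n := by
  intro he; have := congrArg PNat.val he; simp at this; omega

def rowPerm (a : ℕ+) : ℕ → Equiv.Perm ℕ+
  | 0 => 1
  | c+1 => Equiv.swap (padd a c) (padd a (c+1)) * rowPerm a c

lemma rowPerm_lt {a x : ℕ+} (c : ℕ) (h : x < a) : rowPerm a c x = x := by
  induction c with
  | zero => rfl
  | succ c ih =>
    simp [rowPerm, ih, Equiv.swap_apply_of_ne_of_ne (ne_padd_of_lt c h) (ne_padd_of_lt (c+1) h)]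

lemma rowPerm_gt {a x : ℕ+} (c : ℕ) (h : (a:ℕ) + c < x) : rowPerm a c x = x := by
  induction c with
  | zero => rfl
  | succ c ih =>
    have h1 : x ≠ padd a c := ne_padd_of_gt (by omega)
    have h2 : x ≠ padd a (c+1) := ne_padd_of_gt (by omega)
    simp [rowPerm, ih (by omega), Equiv.swap_apply_of_ne_of_ne h1 h2]

lemma rowPerm_apply_self (a : ℕ+) (c : ℕ) : rowPerm a c a = padd a c := by
  induction c with
  | zero => rfl
  | succ c ih =>
    simp [rowPerm, ih, Equiv.swap_apply_left]

lemma rowPerm_apply_mid {a : ℕ+} {c k : ℕ} (h : k < c) :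
    rowPerm a c (padd a (k+1)) = padd a k := by
  induction c with
  | zero => omega
  | succ c ih =>
    rcases Nat.lt_or_ge k c with hk | hk
    · simp [rowPerm, ih hk,
        Equiv.swap_apply_of_ne_of_ne (padd_ne (m := k) (n := c) (by omega)) (padd_ne (m := k) (n := c+1) (by omega))]
    · have hk' : c = k := by omega
      subst hk'
      have : rowPerm a c (padd a (c+1)) = padd a (c+1) := rowPerm_gt c (by simp)
      simp [rowPerm, this, Equiv.swap_apply_right]

lemma sort_union_of_lt {α : Type*} [LinearOrder α] {s t : Finset α}
    (h : ∀ a ∈ s, ∀ b ∈ t, a < b) :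
    (s ∪ t).sort (· ≤ ·) = s.sort (· ≤ ·) ++ t.sort (· ≤ ·) := by
  have hd : Disjoint s t := by
    rw [Finset.disjoint_left]
    intro a ha ha'
    exact absurd (h a ha a ha') (lt_irrefl a)
  refine (fun hp hs => List.Perm.eq_of_pairwise' (Finset.pairwise_sort _ _) hs hp) ?_ ?_
  · rw [← Multiset.coe_eq_coe]
    simp only [← Multiset.coe_add, Finset.sort_eq]
    rw [← Finset.disjUnion_eq_union s t hd]; rfl
  · rw [List.pairwise_append]
    refine ⟨Finset.pairwise_sort _ _, Finset.pairwise_sort _ _, ?_⟩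
    intro a ha b hb
    exact (h a ((Finset.mem_sort (α := α) (· ≤ ·)).mp ha) b
      ((Finset.mem_sort (α := α) (· ≤ ·)).mp hb)).le

lemma pdWord_empty : pdWord ∅ = 1 := by
  simp [pdWord]

lemma pdWord_singleton (p : ℕ+ × ℕ+) : pdWord {p} = cellTrans p := by
  simp [pdWord, cellKey, Finset.sort_singleton]

lemma pdWord_union {A B : Finset (ℕ+ × ℕ+)}
    (h : ∀ p ∈ A, ∀ q ∈ B, cellKey p < cellKey q) :
    pdWord (A ∪ B) = pdWord A * pdWord B := by
  unfold pdWord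
  rw [Finset.image_union, sort_union_of_lt, List.map_append, List.prod_append]
  intro a ha b hb
  simp only [Finset.mem_image] at ha hb
  obtain ⟨p, hp, rfl⟩ := ha
  obtain ⟨q, hq, rfl⟩ := hb
  exact h p hp q hq

def rowFinset (a : ℕ+) (c : ℕ) : Finset (ℕ+ × ℕ+) :=
  (Finset.range c).image (fun k => (a, pn k))

lemma mem_rowFinset {a : ℕ+} {c : ℕ} {p : ℕ+ × ℕ+} :
    p ∈ rowFinset a c ↔ p.1 = a ∧ (p.2 : ℕ) ≤ c := by
  simp only [rowFinset, Finset.mem_image, Finset.mem_range]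
  constructor
  · rintro ⟨k, hk, rfl⟩; exact ⟨rfl, by simpa using hk⟩
  · rintro ⟨h1, h2⟩
    refine ⟨(p.2 : ℕ) - 1, by have := p.2.pos; omega, ?_⟩
    have h3 : pn ((p.2:ℕ) - 1) = p.2 := by
      apply PNat.coe_injective; have := p.2.pos; simp; omega
    rw [h3, ← h1]

lemma card_rowFinset (a : ℕ+) (c : ℕ) : (rowFinset a c).card = c := by
  rw [rowFinset, Finset.card_image_of_injective, Finset.card_range]
  intro x y hxy
  simpa using congrArg (fun p => ((p.2 : ℕ+) : ℕ)) hxy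

lemma cellTrans_eq (a : ℕ+) (c : ℕ) :
    cellTrans (a, pn c) = Equiv.swap (padd a c) (padd a (c+1)) := by
  have h1 : (a + pn c - 1 : ℕ+) = padd a c := by
    apply PNat.coe_injective
    rw [PNat.sub_coe, if_pos]
    · simp [PNat.add_coe]
    · rw [← PNat.coe_lt_coe]; rw [PNat.add_coe]; have := a.pos; simp; omega
  have h2 : (a + pn c : ℕ+) = padd a (c+1) := by
    apply PNat.coe_injective; rw [PNat.add_coe]; simp
  rw [cellTrans]
  rw [show (a, pn c).1 + (a, pn c).2 = a + pn c from rfl, h1, h2]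

lemma rowFinset_succ (a : ℕ+) (c : ℕ) :
    rowFinset a (c+1) = {(a, pn c)} ∪ rowFinset a c := by
  ext p
  simp only [mem_rowFinset, Finset.mem_union, Finset.mem_singleton]
  constructor
  · rintro ⟨h1, h2⟩
    rcases Nat.lt_or_ge (p.2 : ℕ) (c+1) with h | h
    · exact Or.inr ⟨h1, by omega⟩
    · left
      have : p.2 = pn c := by apply PNat.coe_injective; simp; omega
      rw [← h1, ← this]
  · rintro (h | ⟨h1, h2⟩)
    · subst h; exact ⟨rfl, by simp⟩
    · exact ⟨h1, by omega⟩

lemma pdWord_rowFinset (a : ℕ+) (c : ℕ) :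
    pdWord (rowFinset a c) = rowPerm a c := by
  induction c with
  | zero =>
    have : rowFinset a 0 = ∅ := by simp [rowFinset]
    rw [this, pdWord_empty]; rfl
  | succ c ih =>
    rw [rowFinset_succ, pdWord_union, pdWord_singleton, cellTrans_eq, ih]
    · rfl
    · intro p hp q hq
      simp only [Finset.mem_singleton] at hp
      subst hp
      obtain ⟨hq1, hq2⟩ := mem_rowFinset.mp hq
      rw [cellKey, cellKey, ← hq1, Prod.Lex.lt_iff]
      right
      refine ⟨rfl, ?_⟩
      show OrderDual.toDual (pn c) < OrderDual.toDual q.2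
      rw [OrderDual.toDual_lt_toDual, ← PNat.coe_lt_coe]
      simp; omega

lemma rowPerm_inv_top (a : ℕ+) (c : ℕ) : (rowPerm a c)⁻¹ (padd a c) = a := by
  rw [← rowPerm_apply_self a c, ← Equiv.Perm.mul_apply, inv_mul_cancel, Equiv.Perm.one_apply]

lemma rowPerm_inv_coe {a : ℕ+} {c : ℕ} {x : ℕ+} (hx : x ≠ padd a c) :
    (((rowPerm a c)⁻¹ x : ℕ+) : ℕ) =
      if (a:ℕ) ≤ (x:ℕ) ∧ (x:ℕ) < (a:ℕ) + c then (x:ℕ) + 1 else (x:ℕ) := by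
  have hxne : (x : ℕ) ≠ (a:ℕ) + c := by
    intro h; exact hx (PNat.coe_injective (by simpa using h))
  rcases Nat.lt_or_ge (x:ℕ) (a:ℕ) with h1 | h1
  · have : (rowPerm a c)⁻¹ x = x := by
      conv_lhs => rw [← rowPerm_lt c h1]
      rw [← Equiv.Perm.mul_apply, inv_mul_cancel, Equiv.Perm.one_apply]
    rw [this, if_neg (by omega)]
  rcases Nat.lt_or_ge ((a:ℕ) + c) (x:ℕ) with h2 | h2
  · have : (rowPerm a c)⁻¹ x = x := by
      conv_lhs => rw [← rowPerm_gt c h2]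
      rw [← Equiv.Perm.mul_apply, inv_mul_cancel, Equiv.Perm.one_apply]
    rw [this, if_neg (by omega)]
  · -- a ≤ x < a + c
    have hxlt : (x:ℕ) < (a:ℕ) + c := by omega
    set k : ℕ := (x:ℕ) - (a:ℕ) with hk
    have hkc : k < c := by omega
    have hxeq : x = padd a k := PNat.coe_injective (by simp [hk]; omega)
    have : (rowPerm a c)⁻¹ x = padd a (k+1) := by
      conv_lhs => rw [hxeq, ← rowPerm_apply_mid (a := a) hkc]
      rw [← Equiv.Perm.mul_apply, inv_mul_cancel, Equiv.Perm.one_apply]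
    rw [this, if_pos (by omega)]
    simp; omega

lemma rowPerm_inv_lt {a : ℕ+} {c : ℕ} {x y : ℕ+} (hx : x ≠ padd a c)
    (hy : y ≠ padd a c) (hxy : x < y) :
    (rowPerm a c)⁻¹ x < (rowPerm a c)⁻¹ y := by
  have hxne : (x : ℕ) ≠ (a:ℕ) + c := by
    intro h; exact hx (PNat.coe_injective (by simpa using h))
  have hyne : (y : ℕ) ≠ (a:ℕ) + c := by
    intro h; exact hy (PNat.coe_injective (by simpa using h))
  rw [← PNat.coe_lt_coe] at hxy ⊢
  rw [rowPerm_inv_coe hx, rowPerm_inv_coe hy]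
  split_ifs <;> omega

lemma rowPerm_inv_lt_iff {a : ℕ+} {c : ℕ} {x y : ℕ+} (hx : x ≠ padd a c)
    (hy : y ≠ padd a c) :
    (rowPerm a c)⁻¹ x < (rowPerm a c)⁻¹ y ↔ x < y := by
  constructor
  · intro h
    rcases lt_trichotomy x y with h' | h' | h'
    · exact h'
    · subst h'; exact absurd h (lt_irrefl _)
    · exact absurd h (not_lt_of_gt (rowPerm_inv_lt hy hx h'))
  · exact rowPerm_inv_lt hx hy

lemma inv_set_finite (w : Equiv.Perm ℕ+) (hw : {x : ℕ+ | w x ≠ x}.Finite) :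
    {p : ℕ+ × ℕ+ | p.1 < p.2 ∧ w p.2 < w p.1}.Finite := by
  by_cases hid : ∀ x, w x = x
  · have : {p : ℕ+ × ℕ+ | p.1 < p.2 ∧ w p.2 < w p.1} = ∅ := by
      ext p; simp only [Set.mem_setOf_eq, Set.mem_empty_iff_false, iff_false]
      rintro ⟨h1, h2⟩
      rw [hid, hid] at h2
      exact absurd h1 (not_lt_of_gt h2)
    rw [this]; exact Set.finite_empty
  · push_neg at hid
    obtain ⟨x₀, hx₀⟩ := hid
    set T : Finset ℕ+ := hw.toFinset ∪ hw.toFinset.image w with hT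
    have hTne : T.Nonempty := ⟨x₀, by simp [hT, hx₀]⟩
    set K := T.max' hTne with hK
    apply Set.Finite.subset ((Set.finite_Iic K).prod (Set.finite_Iic K))
    rintro ⟨i, j⟩ ⟨h1, h2⟩
    simp only [Set.mem_setOf_eq] at h1 h2
    have hjK : j ≤ K := by
      by_cases hj : w j = j
      · have hi : w i ≠ i := by
          intro hi
          rw [hi, hj] at h2
          exact absurd h1 (not_lt_of_gt h2)
        have : w i ∈ T := by
          simp only [hT, Finset.mem_union, Finset.mem_image, Set.Finite.mem_toFinset]
          exact Or.inr ⟨i, hi, rfl⟩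
        have := T.le_max' _ this
        rw [hj] at h2
        exact le_of_lt (lt_of_lt_of_le h2 this)
      · have : j ∈ T := by
          simp only [hT, Finset.mem_union, Set.Finite.mem_toFinset]
          exact Or.inl hj
        exact T.le_max' _ this
    exact ⟨le_of_lt (lt_of_lt_of_le h1 hjK), hjK⟩


theorem main_aux : ∀ (n : ℕ) (w : Equiv.Perm ℕ+), {x : ℕ+ | w x ≠ x}.Finite → invNum w = n →
    ∃ B : Finset (ℕ+ × ℕ+), (↑B : Set (ℕ+ × ℕ+)) = bottomSet w ∧ IsPipeDream w B := by
  intro n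
  induction n using Nat.strong_induction_on with
  | _ n ih =>
  intro w hw hn
  by_cases hid : ∀ x, w x = x
  · -- w is the identity
    have hw1 : w = 1 := Equiv.ext fun x => hid x
    subst hw1
    have hinv0 : invNum (1 : Equiv.Perm ℕ+) = 0 := by
      rw [invNum]
      convert Set.ncard_empty (ℕ+ × ℕ+)
      ext p
      simp only [Set.mem_setOf_eq, Set.mem_empty_iff_false, iff_false, Equiv.Perm.one_apply]
      rintro ⟨h1, h2⟩
      exact absurd h1 (not_lt_of_gt h2)
    refine ⟨∅, ?_, ?_, ?_⟩
    · ext p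
      simp only [Finset.coe_empty, Set.mem_empty_iff_false, false_iff, bottomSet,
        Set.mem_setOf_eq]
      intro hp
      have hzero : lehmer 1 p.1 = 0 := by
        rw [lehmer]
        convert Set.ncard_empty ℕ+
        ext j
        simp only [Set.mem_setOf_eq, Set.mem_empty_iff_false, iff_false, Equiv.Perm.one_apply]
        rintro ⟨h1, h2⟩
        exact absurd h1 (not_lt_of_gt h2)
      rw [hzero] at hp
      have := p.2.pos
      omega
    · simp [hinv0]
    · exact pdWord_empty
  · -- there is a non-fixed point
    push_neg at hid
    obtain ⟨x₀, hx₀⟩ := hid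
    have hne : hw.toFinset.Nonempty := ⟨x₀, by simpa using hx₀⟩
    set i₀ := hw.toFinset.min' hne with hi₀def
    have hi₀mem : w i₀ ≠ i₀ := by
      have := hw.toFinset.min'_mem hne
      simpa using this
    have hfix : ∀ x : ℕ+, x < i₀ → w x = x := by
      intro x hx
      by_contra hxne
      exact absurd (hw.toFinset.min'_le x (by simpa using hxne)) (not_le_of_gt hx)
    have hfix' : ∀ x : ℕ+, w x < i₀ → w x = x := by
      intro x h
      exact w.injective (hfix (w x) h)
    have hgt : i₀ < w i₀ := by
      rcases lt_trichotomy (w i₀) i₀ with h | h | h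
      · exact absurd (hfix' i₀ h) hi₀mem
      · exact absurd h hi₀mem
      · exact h
    have hgt' : (i₀ : ℕ) < (w i₀ : ℕ) := hgt
    set c : ℕ := (w i₀ : ℕ) - (i₀ : ℕ) with hcdef
    have hc1 : 1 ≤ c := by omega
    have hwi₀ : w i₀ = padd i₀ c := PNat.coe_injective (by simp [hcdef]; omega)
    set σ := rowPerm i₀ c with hσdef
    set u : Equiv.Perm ℕ+ := σ⁻¹ * w with hudef
    have huapp : ∀ x, u x = σ⁻¹ (w x) := fun x => rfl
    have hvpos : ∀ x : ℕ+, i₀ ≤ x → i₀ ≤ w x := by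
      intro x hx
      by_contra h
      push_neg at h
      have h2 := hfix' x h
      rw [h2] at h
      exact absurd hx (not_le_of_gt h)
    have hvne : ∀ x : ℕ+, x ≠ i₀ → w x ≠ padd i₀ c := by
      intro x hx he
      exact hx (w.injective (he.trans hwi₀.symm))
    have husmall : ∀ x : ℕ+, x ≤ i₀ → u x = x := by
      intro x hx
      rcases eq_or_lt_of_le hx with h | h
      · rw [huapp, h, hwi₀, hσdef, rowPerm_inv_top]
      · rw [huapp, hfix x h]
        apply PNat.coe_injective
        have hh : (x : ℕ) < (i₀ : ℕ) := h
        rw [hσdef, rowPerm_inv_coe (ne_padd_of_lt c h), if_neg (by omega)]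
    have horder : ∀ x y : ℕ+, x ≠ i₀ → y ≠ i₀ → (u x < u y ↔ w x < w y) := by
      intro x y hx hy
      rw [huapp, huapp, hσdef]
      exact rowPerm_inv_lt_iff (hvne x hx) (hvne y hy)
    have hufin : {x : ℕ+ | u x ≠ x}.Finite := by
      apply Set.Finite.subset (hw.union (Set.finite_Icc i₀ (padd i₀ c)))
      intro x hx
      simp only [Set.mem_setOf_eq] at hx
      by_cases hwx : w x = x
      · right
        rw [huapp, hwx] at hx
        by_contra hmem
        simp only [Set.mem_Icc, not_and_or, not_le] at hmem
        apply hx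
        apply PNat.coe_injective
        rcases hmem with h | h
        · have hh : (x : ℕ) < (i₀ : ℕ) := h
          rw [hσdef, rowPerm_inv_coe (ne_padd_of_lt c h), if_neg (by omega)]
        · have hh : (i₀ : ℕ) + c < (x : ℕ) := h
          rw [hσdef, rowPerm_inv_coe (ne_padd_of_gt hh), if_neg (by omega)]
      · left; exact hwx
    -- Lehmer code facts
    have lehw_lt : ∀ i : ℕ+, i < i₀ → lehmer w i = 0 := by
      intro i hi
      rw [lehmer]
      convert Set.ncard_empty ℕ+
      ext j
      simp only [Set.mem_setOf_eq, Set.mem_empty_iff_false, iff_false]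
      rintro ⟨h1, h2⟩
      rw [hfix i hi] at h2
      have h3 := hfix' j (h2.trans hi)
      rw [h3] at h2
      exact absurd h1 (not_lt_of_gt h2)
    have himg : w '' {j : ℕ+ | i₀ < j ∧ w j < w i₀}
        = {y : ℕ+ | i₀ ≤ y ∧ (y : ℕ) < (i₀ : ℕ) + c} := by
      ext y
      constructor
      · rintro ⟨j, ⟨hj1, hj2⟩, rfl⟩
        refine ⟨hvpos j hj1.le, ?_⟩
        rw [hwi₀] at hj2
        exact hj2
      · rintro ⟨h1, h2⟩
        refine ⟨w⁻¹ y, ⟨?_, ?_⟩, w.apply_symm_apply y⟩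
        · rcases lt_trichotomy (w⁻¹ y) i₀ with h | h | h
          · exfalso
            have hthis := hfix (w⁻¹ y) h
            rw [← Equiv.Perm.mul_apply, mul_inv_cancel, Equiv.Perm.one_apply] at hthis
            rw [← hthis] at h
            exact absurd h1 (not_le_of_gt h)
          · exfalso
            have : y = w i₀ := by rw [← h, ← Equiv.Perm.mul_apply, mul_inv_cancel, Equiv.Perm.one_apply]
            rw [this, hwi₀] at h2
            simp at h2
          · exact h
        · rw [← Equiv.Perm.mul_apply, mul_inv_cancel, Equiv.Perm.one_apply, hwi₀]
          exact h2
    have hcoeimg : (fun y : ℕ+ => (y : ℕ)) '' {y : ℕ+ | i₀ ≤ y ∧ (y : ℕ) < (i₀ : ℕ) + c}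
        = Set.Ico (i₀ : ℕ) ((i₀ : ℕ) + c) := by
      ext m
      constructor
      · rintro ⟨y, ⟨h1, h2⟩, rfl⟩
        exact ⟨h1, h2⟩
      · rintro ⟨h1, h2⟩
        have hm : 0 < m := lt_of_lt_of_le i₀.pos h1
        exact ⟨⟨m, hm⟩, ⟨h1, h2⟩, rfl⟩
    have lehw_i₀ : lehmer w i₀ = c := by
      rw [lehmer, ← Set.ncard_image_of_injective _ w.injective, himg,
        ← Set.ncard_image_of_injective _ PNat.coe_injective, hcoeimg,
        ← Finset.coe_Ico, Set.ncard_coe_finset, Nat.card_Ico]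
      omega
    have lehu_small : ∀ i : ℕ+, i ≤ i₀ → lehmer u i = 0 := by
      intro i hi
      rw [lehmer]
      convert Set.ncard_empty ℕ+
      ext j
      simp only [Set.mem_setOf_eq, Set.mem_empty_iff_false, iff_false]
      rintro ⟨h1, h2⟩
      rw [husmall i hi] at h2
      have h3 : u j ≤ i₀ := le_trans h2.le hi
      have h4 := husmall (u j) h3
      have h5 : u j = j := u.injective h4
      rw [h5] at h2
      exact absurd h1 (not_lt_of_gt h2)
    have lehu_big : ∀ i : ℕ+, i₀ < i → lehmer u i = lehmer w i := by
      intro i hi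
      rw [lehmer, lehmer]
      congr 1
      ext j
      simp only [Set.mem_setOf_eq]
      exact and_congr_right fun h1 => horder j i (hi.trans h1).ne' hi.ne'
    -- inversion counting
    have hWfin := inv_set_finite w hw
    have hIu1 : ∀ p : ℕ+ × ℕ+, p.1 < p.2 → u p.2 < u p.1 → i₀ < p.1 := by
      intro p h1 h2
      by_contra h
      push_neg at h
      rw [husmall p.1 h] at h2
      have h3 : u p.2 ≤ i₀ := le_trans h2.le h
      have h5 : u p.2 = p.2 := u.injective (husmall (u p.2) h3)
      rw [h5] at h2
      exact absurd h1 (not_lt_of_gt h2)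
    have hsplit : {p : ℕ+ × ℕ+ | p.1 < p.2 ∧ w p.2 < w p.1}
        = ((fun j => (i₀, j)) '' {j : ℕ+ | i₀ < j ∧ w j < w i₀})
          ∪ {p : ℕ+ × ℕ+ | p.1 < p.2 ∧ u p.2 < u p.1} := by
      ext p
      simp only [Set.mem_setOf_eq, Set.mem_union, Set.mem_image]
      constructor
      · rintro ⟨h1, h2⟩
        by_cases hp1 : p.1 = i₀
        · left
          exact ⟨p.2, ⟨hp1 ▸ h1, hp1 ▸ h2⟩, by rw [← hp1]⟩
        · right
          have hgt1 : i₀ < p.1 := by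
            rcases lt_trichotomy p.1 i₀ with h | h | h
            · exfalso
              rw [hfix p.1 h] at h2
              have h3 := hfix' p.2 (h2.trans h)
              rw [h3] at h2
              exact absurd h1 (not_lt_of_gt h2)
            · exact absurd h hp1
            · exact h
          exact ⟨h1, (horder p.2 p.1 (hgt1.trans h1).ne' hgt1.ne').mpr h2⟩
      · rintro (⟨j, ⟨hj1, hj2⟩, rfl⟩ | ⟨h1, h2⟩)
        · exact ⟨hj1, hj2⟩
        · have hgt1 : i₀ < p.1 := hIu1 p h1 h2
          exact ⟨h1, (horder p.2 p.1 (hgt1.trans h1).ne' hgt1.ne').mp h2⟩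
    have hdisj : Disjoint ((fun j => (i₀, j)) '' {j : ℕ+ | i₀ < j ∧ w j < w i₀})
        {p : ℕ+ × ℕ+ | p.1 < p.2 ∧ u p.2 < u p.1} := by
      rw [Set.disjoint_left]
      rintro p ⟨j, hj, rfl⟩ hp
      simp only [Set.mem_setOf_eq] at hp
      exact absurd (hIu1 (i₀, j) hp.1 hp.2) (lt_irrefl i₀)
    have hfinU : (((fun j => (i₀, j)) '' {j : ℕ+ | i₀ < j ∧ w j < w i₀})
        ∪ {p : ℕ+ × ℕ+ | p.1 < p.2 ∧ u p.2 < u p.1}).Finite := hsplit ▸ hWfin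
    have hIwcard : invNum w = c + invNum u := by
      have hinj : Function.Injective (fun j : ℕ+ => (i₀, j)) := by
        intro a b hab
        exact congrArg Prod.snd hab
      rw [invNum, hsplit, Set.ncard_union_eq hdisj
        (hfinU.subset Set.subset_union_left) (hfinU.subset Set.subset_union_right),
        Set.ncard_image_of_injective _ hinj]
      have h1 : Set.ncard {j : ℕ+ | i₀ < j ∧ w j < w i₀} = c := lehw_i₀
      rw [h1, invNum]
    have hn' : invNum u < n := by omega
    obtain ⟨B₀, hB₀coe, hB₀card, hB₀word⟩ := ih (invNum u) hn' u hufin rfl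
    have hB₀mem : ∀ p : ℕ+ × ℕ+, p ∈ B₀ ↔ (p.2 : ℕ) ≤ lehmer u p.1 := by
      intro p
      rw [← Finset.mem_coe, hB₀coe]
      rfl
    have hB₀big : ∀ p : ℕ+ × ℕ+, p ∈ B₀ → i₀ < p.1 := by
      intro p hp
      rw [hB₀mem] at hp
      by_contra h
      push_neg at h
      rw [lehu_small p.1 h] at hp
      have := p.2.pos
      omega
    have hdisjF : Disjoint (rowFinset i₀ c) B₀ := by
      rw [Finset.disjoint_left]
      intro p hp hp'
      have h1 := (mem_rowFinset.mp hp).1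
      have h2 := hB₀big p hp'
      rw [h1] at h2
      exact absurd h2 (lt_irrefl i₀)
    have hcoeB : ((rowFinset i₀ c ∪ B₀ : Finset (ℕ+ × ℕ+)) : Set (ℕ+ × ℕ+)) = bottomSet w := by
      ext p
      simp only [Finset.coe_union, Set.mem_union, Finset.mem_coe, mem_rowFinset, bottomSet,
        Set.mem_setOf_eq]
      constructor
      · rintro (⟨h1, h2⟩ | hp)
        · rw [h1, lehw_i₀]
          exact h2
        · have hb := hB₀big p hp
          rw [hB₀mem] at hp
          rw [← lehu_big p.1 hb]
          exact hp
      · intro hp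
        rcases lt_trichotomy p.1 i₀ with h | h | h
        · rw [lehw_lt p.1 h] at hp
          have := p.2.pos
          omega
        · left
          rw [h, lehw_i₀] at hp
          exact ⟨h, hp⟩
        · right
          rw [hB₀mem, lehu_big p.1 h]
          exact hp
    have hcard : (rowFinset i₀ c ∪ B₀).card = invNum w := by
      rw [Finset.card_union_of_disjoint hdisjF, card_rowFinset, hB₀card, hIwcard]
    have hword : pdWord (rowFinset i₀ c ∪ B₀) = w := by
      rw [pdWord_union, pdWord_rowFinset, hB₀word, ← hσdef, hudef, mul_inv_cancel_left]
      intro p hp q hq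
      have h1 := (mem_rowFinset.mp hp).1
      have h2 := hB₀big q hq
      rw [cellKey, cellKey, Prod.Lex.lt_iff]
      left
      rw [h1]
      exact h2
    exact ⟨rowFinset i₀ c ∪ B₀, hcoeB, hcard, hword⟩


end PipeAux

/-- the bottom pipe dream `B_w` is a pipe dream of `w`. -/
theorem bottom_is_pipe_dream (w : Equiv.Perm ℕ+)
    (hw : {x : ℕ+ | w x ≠ x}.Finite) :
    ∃ B : Finset (ℕ+ × ℕ+), (↑B : Set (ℕ+ × ℕ+)) = bottomSet w ∧ IsPipeDream w B := by
  exact main_aux (invNum w) w hw rfl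
end
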